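/- arXiv:0706.1837 — 6 statements merged into one kernel-verified Lean document; each statement's English description precedes it below -/
import Mathlib

section
/- If r is a subgeometric sequence and R(n) = ∑_{k=0}^{n-1} r(k) for n ≥ 1 with R(0) = 1, then r(n)/R(n) → 0 as n → ∞. -/
open Filter Real Finset

/-- A sequence `r : ℕ → ℝ` is subgeometric if `r n ≥ 1`, `r` is non-decreasing, and
`n ↦ log (r n) / n` is non-increasing (for `n ≥ 1`) with limit `0`. -/
def Subgeometric (r : ℕ → ℝ) : Prop :=
  (∀ n, 1 ≤ r n) ∧ Monotone r ∧
  (∀ m n : ℕ, 1 ≤ m → m ≤ n → Real.log (r n) / n ≤ Real.log (r m) / m) ∧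
  Tendsto (fun n : ℕ => Real.log (r n) / n) atTop (nhds 0)

theorem subgeometric_ratio_partial_sum_tendsto_zero (r : ℕ → ℝ) (hr : Subgeometric r)
    (R : ℕ → ℝ) (hR0 : R 0 = 1) (hR : ∀ n : ℕ, 1 ≤ n → R n = ∑ k ∈ Finset.range n, r k) :
    Tendsto (fun n : ℕ => r n / R n) atTop (nhds 0) := by
  obtain ⟨h1, hmono, hdec, hlim⟩ := hr
  rw [Metric.tendsto_atTop]
  intro ε hε
  obtain ⟨K, hK⟩ := exists_nat_gt (Real.exp 1 / ε)
  have hKexp : 0 < Real.exp 1 / ε := div_pos (Real.exp_pos 1) hε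
  have hK0 : 0 < K := by
    rcases Nat.eq_zero_or_pos K with h | h
    · subst h; simp at hK; linarith
    · exact h
  have hKR : (0:ℝ) < K := Nat.cast_pos.mpr hK0
  have h1K : (0:ℝ) < 1 / K := by positivity
  obtain ⟨M, hM⟩ := Filter.eventually_atTop.mp (hlim.eventually (gt_mem_nhds h1K))
  refine ⟨max M 1 + K, fun n hn => ?_⟩
  set m := n - K with hmdef
  have hmn : m + K = n := by omega
  have hmM : M ≤ m := by omega
  have hm1 : 1 ≤ m := by omega
  have hm0 : (0:ℝ) < m := by exact_mod_cast hm1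
  have hrm1 : 1 ≤ r m := h1 m
  have hrmpos : (0:ℝ) < r m := by linarith
  -- R n ≥ K * r m
  have hRn : (K:ℝ) * r m ≤ R n := by
    rw [hR n (by omega)]
    calc (K:ℝ) * r m = ∑ _k ∈ Finset.Ico m n, r m := by
          rw [Finset.sum_const, Nat.card_Ico, nsmul_eq_mul]
          congr 2
          omega
      _ ≤ ∑ k ∈ Finset.Ico m n, r k :=
          Finset.sum_le_sum (fun k hk => hmono (Finset.mem_Ico.mp hk).1)
      _ ≤ ∑ k ∈ Finset.range n, r k := by
          apply Finset.sum_le_sum_of_subset_of_nonneg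
          · intro k hk
            rw [Finset.mem_range]
            exact (Finset.mem_Ico.mp hk).2
          · intro k _ _
            linarith [h1 k]
  have hRpos : 0 < R n := lt_of_lt_of_le (by positivity) hRn
  -- r n ≤ e * r m
  have hq : Real.log (r m) / m < 1 / K := hM m hmM
  have hq0 : 0 ≤ Real.log (r m) / m := div_nonneg (Real.log_nonneg hrm1) hm0.le
  have hd : Real.log (r n) / n ≤ Real.log (r m) / m := hdec m n hm1 (by omega)
  have hn0 : (0:ℝ) < n := by
    have : 1 ≤ n := by omega
    exact_mod_cast this
  have hlogn : Real.log (r n) ≤ n * (Real.log (r m) / m) := by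
    rw [div_le_iff₀ hn0] at hd
    linarith [hd]
  have hlogm : Real.log (r m) = m * (Real.log (r m) / m) := by
    field_simp
  have hKq : (K:ℝ) * (Real.log (r m) / m) ≤ 1 := by
    calc (K:ℝ) * (Real.log (r m) / m) ≤ K * (1/K) := by
          apply mul_le_mul_of_nonneg_left hq.le hKR.le
      _ = 1 := by field_simp
  have hcast : (n:ℝ) = (m:ℝ) + (K:ℝ) := by
    exact_mod_cast congrArg (Nat.cast : ℕ → ℝ) hmn.symm
  have hlog : Real.log (r n) ≤ Real.log (r m) + 1 := by
    rw [hlogm]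
    calc Real.log (r n) ≤ n * (Real.log (r m) / m) := hlogn
      _ = m * (Real.log (r m) / m) + K * (Real.log (r m) / m) := by
          rw [hcast]; ring
      _ ≤ m * (Real.log (r m) / m) + 1 := by linarith
  have hrn : r n ≤ Real.exp 1 * r m := by
    have : r n = Real.exp (Real.log (r n)) := (Real.exp_log (by linarith [h1 n])).symm
    rw [this]
    calc Real.exp (Real.log (r n)) ≤ Real.exp (Real.log (r m) + 1) :=
          Real.exp_le_exp.mpr (by linarith)
      _ = Real.exp 1 * r m := by
          rw [Real.exp_add, Real.exp_log hrmpos]; ring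
  -- conclude
  have hratio : r n / R n ≤ Real.exp 1 / K := by
    rw [div_le_div_iff₀ hRpos hKR]
    calc r n * K ≤ (Real.exp 1 * r m) * K := by
          apply mul_le_mul_of_nonneg_right hrn hKR.le
      _ = Real.exp 1 * (K * r m) := by ring
      _ ≤ Real.exp 1 * R n := by
          apply mul_le_mul_of_nonneg_left hRn (Real.exp_pos 1).le
  have hfin : Real.exp 1 / K < ε := by
    rw [div_lt_iff₀ hKR]
    rw [div_lt_iff₀ hε] at hK
    linarith
  rw [Real.dist_eq, sub_zero, abs_of_nonneg (div_nonneg (by linarith [h1 n]) hRpos.le)]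
  linarith
end

section
/- If φ(v) = c(1 + log v)^α with c ∈ (0,1] and α > 0, and r_φ(z) = φ(H_φ⁻¹(z)) with H_φ(v) = ∫_1^v dx/φ(x), then r_φ(n)/(log n)^α converges to a positive finite constant as n → ∞ (i.e., r_φ(n) ≍ (log n)^α). -/
open Set Filter Real

/-- Logarithmic rates: if `φ(v) = c(1 + log v)^α` with `c ∈ (0,1]`, `α > 0`, and
`r_φ(z) = φ(H_φ⁻¹(z))`, then `r_φ(n)/(log n)^α` converges to a positive finite limit. -/
theorem rphi_logarithmic_rate (c α : ℝ) (hc : c ∈ Ioc (0:ℝ) 1) (hα : 0 < α)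
    (φ : ℝ → ℝ) (hφ : ∀ v : ℝ, φ v = c * (1 + Real.log v) ^ α)
    (H : ℝ → ℝ) (hH : ∀ v : ℝ, H v = ∫ x in (1:ℝ)..v, 1 / φ x)
    (Hinv : ℝ → ℝ)
    (hinv_mem : ∀ z ∈ Ici (0:ℝ), Hinv z ∈ Ici (1:ℝ))
    (hinv_left : ∀ v ∈ Ici (1:ℝ), Hinv (H v) = v)
    (hinv_right : ∀ z ∈ Ici (0:ℝ), H (Hinv z) = z)
    (r : ℝ → ℝ) (hr : ∀ z : ℝ, r z = φ (Hinv z)) :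
    ∃ L : ℝ, 0 < L ∧
      Tendsto (fun n : ℕ => r n / (Real.log n) ^ α) atTop (nhds L) := by
  obtain ⟨hc0, hc1⟩ := hc
  -- basic facts about φ
  have hφpos : ∀ x : ℝ, 1 ≤ x → 0 < φ x := by
    intro x hx
    rw [hφ]
    have h1 : (0:ℝ) ≤ Real.log x := Real.log_nonneg hx
    have : (0:ℝ) < 1 + Real.log x := by linarith
    positivity
  have hφgec : ∀ x : ℝ, 1 ≤ x → c ≤ φ x := by
    intro x hx
    rw [hφ]
    have h1 : (0:ℝ) ≤ Real.log x := Real.log_nonneg hx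
    have h2 : (1:ℝ) ≤ (1 + Real.log x) ^ α :=
      Real.one_le_rpow (by linarith) hα.le
    nlinarith
  have hφmono : ∀ x y : ℝ, 1 ≤ x → x ≤ y → φ x ≤ φ y := by
    intro x y hx hxy
    rw [hφ, hφ]
    have h1 : (0:ℝ) ≤ Real.log x := Real.log_nonneg hx
    have h2 : Real.log x ≤ Real.log y := Real.log_le_log (by linarith) hxy
    have := Real.rpow_le_rpow (x := 1 + Real.log x) (y := 1 + Real.log y)
      (by linarith) (by linarith) hα.le
    nlinarith
  -- continuity and integrability of 1/φ
  have hcont : ContinuousOn (fun x => 1 / φ x) (Ici (1:ℝ)) := by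
    have hφcont : ContinuousOn φ (Ici (1:ℝ)) := by
      have : ContinuousOn (fun x : ℝ => c * (1 + Real.log x) ^ α) (Ici (1:ℝ)) := by
        apply ContinuousOn.mul continuousOn_const
        apply ContinuousOn.rpow_const
        · exact continuousOn_const.add (Real.continuousOn_log.mono (by
            intro x hx
            simp only [mem_compl_iff, mem_singleton_iff]
            intro h
            rw [h] at hx
            exact absurd hx (by norm_num)))
        · intro x _; exact Or.inr hα.le
      exact this.congr (fun x _ => hφ x)
    exact continuousOn_const.div hφcont (fun x hx => (hφpos x hx).ne')
  have hintg : ∀ a b : ℝ, 1 ≤ a → 1 ≤ b →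
      IntervalIntegrable (fun x => 1 / φ x) MeasureTheory.volume a b := by
    intro a b ha hb
    apply ContinuousOn.intervalIntegrable
    apply hcont.mono
    intro x hx
    rcases le_total a b with h | h
    · rw [uIcc_of_le h] at hx; exact le_trans ha hx.1
    · rw [uIcc_of_ge h] at hx; exact le_trans hb hx.1
  -- H is strictly monotone on [1, ∞)
  have hsplit : ∀ a b : ℝ, 1 ≤ a → 1 ≤ b →
      H b = H a + ∫ x in a..b, 1 / φ x := by
    intro a b ha hb
    rw [hH, hH]
    rw [intervalIntegral.integral_add_adjacent_intervals (hintg 1 a le_rfl ha)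
      (hintg a b ha hb)]
  have hmono : StrictMonoOn H (Ici (1:ℝ)) := by
    intro a ha b hb hab
    have h := hsplit a b ha hb
    have hpos : 0 < ∫ x in a..b, 1 / φ x := by
      apply intervalIntegral.intervalIntegral_pos_of_pos_on (hintg a b ha hb) _ hab
      intro x hx
      exact div_pos one_pos (hφpos x (le_trans ha hx.1.le))
    linarith
  -- integral bounds for H
  have hHle : ∀ v : ℝ, 1 ≤ v → H v ≤ (v - 1) / c := by
    intro v hv
    rw [hH]
    have : ∫ x in (1:ℝ)..v, 1 / φ x ≤ ∫ _x in (1:ℝ)..v, 1 / c := by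
      apply intervalIntegral.integral_mono_on hv (hintg 1 v le_rfl hv)
        intervalIntegrable_const
      intro x hx
      exact div_le_div_of_nonneg_left one_pos.le hc0 (hφgec x hx.1)
    rw [intervalIntegral.integral_const] at this
    calc (∫ x in (1:ℝ)..v, 1 / φ x) ≤ (v - 1) • (1 / c) := this
    _ = (v - 1) / c := by rw [smul_eq_mul]; ring
  have hHge : ∀ v : ℝ, 1 ≤ v → (v - 1) * (1 / φ v) ≤ H v := by
    intro v hv
    rw [hH]
    have : ∫ _x in (1:ℝ)..v, 1 / φ v ≤ ∫ x in (1:ℝ)..v, 1 / φ x := by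
      apply intervalIntegral.integral_mono_on hv intervalIntegrable_const
        (hintg 1 v le_rfl hv)
      intro x hx
      exact div_le_div_of_nonneg_left one_pos.le (hφpos x hx.1) (hφmono x v hx.1 hx.2)
    rw [intervalIntegral.integral_const, smul_eq_mul] at this
    exact this
  -- lower bound: Hinv z ≥ 1 + c z
  have hlow : ∀ z : ℝ, 0 ≤ z → 1 + c * z ≤ Hinv z := by
    intro z hz
    have hcz : (1:ℝ) ≤ 1 + c * z := by nlinarith
    have h1 : H (1 + c * z) ≤ z := by
      have := hHle (1 + c * z) hcz
      calc H (1 + c * z) ≤ (1 + c * z - 1) / c := this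
      _ = z := by field_simp; ring
    by_contra hcon
    push_neg at hcon
    have := hmono (hinv_mem z hz) hcz hcon
    rw [hinv_right z hz] at this
    linarith
  -- eventual upper bound: log (Hinv z) ≤ (1+δ) log (1 + c z)
  have hupEv : ∀ δ : ℝ, 0 < δ →
      ∀ᶠ z : ℝ in atTop, Real.log (Hinv z) ≤ (1 + δ) * Real.log (1 + c * z) := by
    intro δ hδ
    set β := δ / α with hβdef
    have hβ : 0 < β := div_pos hδ hα
    -- Step 1: eventually in y, 1 + (1+δ) log y ≤ y ^ β
    have t1 : Tendsto (fun y : ℝ => Real.log y / y ^ β) atTop (nhds 0) :=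
      (isLittleO_log_rpow_atTop hβ).tendsto_div_nhds_zero
    have t2 : Tendsto (fun y : ℝ => 1 / y ^ β) atTop (nhds 0) :=
      (tendsto_rpow_atTop hβ).inv_tendsto_atTop.congr (fun y => (one_div _).symm)
    have t3 : Tendsto (fun y : ℝ => 1 / y ^ β + (1 + δ) * (Real.log y / y ^ β))
        atTop (nhds (0 + (1 + δ) * 0)) := t2.add (t1.const_mul _)
    rw [show (0:ℝ) + (1 + δ) * 0 = 0 by ring] at t3
    have hstep1 : ∀ᶠ y : ℝ in atTop, 1 + (1 + δ) * Real.log y ≤ y ^ β := by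
      filter_upwards [t3.eventually (eventually_lt_nhds zero_lt_one),
        eventually_gt_atTop (0:ℝ)] with y hy hy0
      have hyβ : 0 < y ^ β := Real.rpow_pos_of_pos hy0 β
      have := mul_le_mul_of_nonneg_right hy.le hyβ.le
      have heq : (1 / y ^ β + (1 + δ) * (Real.log y / y ^ β)) * y ^ β
          = 1 + (1 + δ) * Real.log y := by field_simp
      rw [heq, one_mul] at this
      exact this
    -- Step 2: compose with y = 1 + c z
    have tcz : Tendsto (fun z : ℝ => 1 + c * z) atTop atTop :=
      tendsto_atTop_add_const_left _ 1 (tendsto_id.const_mul_atTop hc0)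
    have hstep2 := tcz.eventually hstep1
    have hge1 := tcz.eventually (eventually_ge_atTop (1:ℝ))
    filter_upwards [hstep2, hge1, eventually_ge_atTop (0:ℝ)] with z hz1 hz2 hz0
    set y := 1 + c * z with hydef
    have hy0 : (0:ℝ) < y := lt_of_lt_of_le one_pos hz2
    have hlogy : 0 ≤ Real.log y := Real.log_nonneg hz2
    set w := y ^ (1 + δ) with hwdef
    have hw1 : (1:ℝ) ≤ w := Real.one_le_rpow hz2 (by positivity)
    have hlogw : Real.log w = (1 + δ) * Real.log y := Real.log_rpow hy0 _
    -- φ w ≤ c * y ^ δ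
    have hyδ1 : (1:ℝ) ≤ y ^ δ := Real.one_le_rpow hz2 hδ.le
    have hφw : φ w ≤ c * y ^ δ := by
      rw [hφ, hlogw]
      have h1 : (0:ℝ) ≤ 1 + (1 + δ) * Real.log y := by positivity
      have h2 : (1 + (1 + δ) * Real.log y) ^ α ≤ (y ^ β) ^ α :=
        Real.rpow_le_rpow h1 hz1 hα.le
      have h3 : (y ^ β) ^ α = y ^ δ := by
        rw [← Real.rpow_mul hy0.le, hβdef]
        congr 1
        field_simp
      rw [h3] at h2
      nlinarith
    -- w - 1 ≥ c z * y ^ δ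
    have hwlb : c * z * y ^ δ ≤ w - 1 := by
      have : w = y ^ δ * y := by
        rw [hwdef, show (1:ℝ) + δ = δ + 1 by ring, Real.rpow_add hy0, Real.rpow_one]
      rw [this, hydef]
      nlinarith
    -- conclude z ≤ H w
    have hφwpos : 0 < φ w := hφpos w hw1
    have hzHw : z ≤ H w := by
      have h1 := hHge w hw1
      have h2 : z ≤ (w - 1) * (1 / φ w) := by
        have hyδpos : (0:ℝ) < y ^ δ := by positivity
        have hstep : c * z * y ^ δ * (1 / (c * y ^ δ)) ≤ (w - 1) * (1 / φ w) := by
          apply mul_le_mul hwlb _ (by positivity) (by nlinarith)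
          exact div_le_div_of_nonneg_left one_pos.le hφwpos hφw
        have : c * z * y ^ δ * (1 / (c * y ^ δ)) = z := by
          field_simp
        linarith
      linarith
    -- Hinv z ≤ w
    have hinvw : Hinv z ≤ w := by
      by_contra hcon
      push_neg at hcon
      have := hmono (mem_Ici.mpr hw1) (hinv_mem z hz0) hcon
      rw [hinv_right z hz0] at this
      linarith
    have hinvpos : (0:ℝ) < Hinv z := lt_of_lt_of_le one_pos (hinv_mem z hz0)
    calc Real.log (Hinv z) ≤ Real.log w := Real.log_le_log hinvpos hinvw
    _ = (1 + δ) * Real.log y := hlogw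
  -- main limit: (1 + log (Hinv z)) / log z → 1
  have hg : Tendsto (fun z : ℝ => (1 + Real.log (Hinv z)) / Real.log z) atTop (nhds 1) := by
    rw [Metric.tendsto_nhds]
    intro ε hε
    obtain ⟨δ, hδdef⟩ : ∃ d : ℝ, d = min (ε / 4) 1 := ⟨_, rfl⟩
    have hδ0 : 0 < δ := by rw [hδdef]; exact lt_min (by linarith) one_pos
    have hδε : δ ≤ ε / 4 := by rw [hδdef]; exact min_le_left _ _
    obtain ⟨A, hAdef⟩ : ∃ a : ℝ, a = |1 + (1 + δ) * Real.log (2 * c)| + 1 := ⟨_, rfl⟩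
    obtain ⟨B, hBdef⟩ : ∃ b : ℝ, b = |1 + Real.log c| + 1 := ⟨_, rfl⟩
    have hA0 : 0 < A := by rw [hAdef]; positivity
    have hB0 : 0 < B := by rw [hBdef]; positivity
    have hK : ∀ᶠ z : ℝ in atTop,
        max (2 * A / ε) (B / ε) < Real.log z :=
      Real.tendsto_log_atTop.eventually (eventually_gt_atTop _)
    have hK0 : ∀ᶠ z : ℝ in atTop, 0 < Real.log z :=
      Real.tendsto_log_atTop.eventually (eventually_gt_atTop 0)
    have hcz1 : ∀ᶠ z : ℝ in atTop, 1 ≤ c * z := by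
      refine (tendsto_id.const_mul_atTop hc0).eventually (eventually_ge_atTop 1)
    filter_upwards [hupEv δ hδ0, hK, hK0, hcz1, eventually_ge_atTop (0:ℝ)]
      with z hup hKz hL hcz hz0
    obtain ⟨L, hLdef⟩ : ∃ l : ℝ, l = Real.log z := ⟨_, rfl⟩
    obtain ⟨N, hNdef⟩ : ∃ n : ℝ, n = 1 + Real.log (Hinv z) := ⟨_, rfl⟩
    rw [← hLdef] at hL hKz
    -- lower bound on N
    have hczpos : (0:ℝ) < c * z := lt_of_lt_of_le one_pos hcz
    have hlowz := hlow z hz0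
    have hNlb : 1 + Real.log c + L ≤ N := by
      have h1 : Real.log (c * z) ≤ Real.log (Hinv z) :=
        Real.log_le_log hczpos (by nlinarith)
      rw [Real.log_mul hc0.ne' (by nlinarith : z ≠ 0)] at h1
      rw [hNdef, hLdef]
      linarith
    -- upper bound on N
    have hNub : N ≤ 1 + (1 + δ) * Real.log (2 * c) + L + δ * L := by
      have h1 : Real.log (1 + c * z) ≤ Real.log (2 * c * z) := by
        apply Real.log_le_log (by linarith) (by nlinarith)
      rw [show (2:ℝ) * c * z = (2 * c) * z by ring,
        Real.log_mul (by positivity) (by nlinarith : z ≠ 0)] at h1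
      have h2 : Real.log (Hinv z) ≤ (1 + δ) * (Real.log (2 * c) + L) := by
        calc Real.log (Hinv z) ≤ (1 + δ) * Real.log (1 + c * z) := hup
        _ ≤ (1 + δ) * (Real.log (2 * c) + L) := by
            apply mul_le_mul_of_nonneg_left _ (by linarith)
            rw [hLdef]
            linarith
      rw [hNdef]
      linarith [h2]
    -- combine
    rw [Real.dist_eq, abs_sub_lt_iff, ← hNdef, ← hLdef]
    have hεL1 : 2 * A < ε * L := by
      have : 2 * A / ε < L := lt_of_le_of_lt (le_max_left _ _) hKz
      calc 2 * A = (2 * A / ε) * ε := by field_simp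
      _ < L * ε := by exact mul_lt_mul_of_pos_right this hε
      _ = ε * L := by ring
    have hεL2 : B < ε * L := by
      have : B / ε < L := lt_of_le_of_lt (le_max_right _ _) hKz
      calc B = (B / ε) * ε := by field_simp
      _ < L * ε := by exact mul_lt_mul_of_pos_right this hε
      _ = ε * L := by ring
    constructor
    · -- N / L - 1 < ε
      rw [div_sub_one hL.ne', div_lt_iff₀ hL]
      have habs : 1 + (1 + δ) * Real.log (2 * c) ≤ A := by
        rw [hAdef]; clear hNdef
        have := le_abs_self (1 + (1 + δ) * Real.log (2 * c))
        linarith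
      have hδL : δ * L ≤ (ε / 4) * L := mul_le_mul_of_nonneg_right hδε hL.le
      have hεL0 : 0 < ε * L := mul_pos hε hL
      linarith [hNub, habs, hεL1]
    · -- 1 - N / L < ε
      rw [sub_lt_iff_lt_add]
      rw [show ε + N / L = (ε * L + N) / L by field_simp, lt_div_iff₀ hL]
      have habs : -B ≤ 1 + Real.log c := by
        rw [hBdef]
        have := neg_abs_le (1 + Real.log c)
        linarith
      linarith [hNlb, habs, hεL2]
  -- assemble the final limit
  refine ⟨c, hc0, ?_⟩
  have hgα : Tendsto (fun z : ℝ => c * ((1 + Real.log (Hinv z)) / Real.log z) ^ α)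
      atTop (nhds c) := by
    have h1 : Tendsto (fun z : ℝ => c * ((1 + Real.log (Hinv z)) / Real.log z) ^ α)
        atTop (nhds (c * (1:ℝ) ^ α)) :=
      (hg.rpow_const (Or.inl one_ne_zero)).const_mul c
    rw [Real.one_rpow, mul_one] at h1
    exact h1
  have hreal : Tendsto (fun z : ℝ => r z / (Real.log z) ^ α) atTop (nhds c) := by
    apply hgα.congr'
    filter_upwards [Real.tendsto_log_atTop.eventually (eventually_gt_atTop 0),
      eventually_ge_atTop (0:ℝ)] with z hL hz0
    have hinv1 : (1:ℝ) ≤ Hinv z := hinv_mem z hz0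
    have hN0 : (0:ℝ) ≤ 1 + Real.log (Hinv z) := by
      have := Real.log_nonneg hinv1; linarith
    rw [Real.div_rpow hN0 hL.le, hr, hφ]
    ring
  exact hreal.comp tendsto_natCast_atTop_atTop
end

section
/- Suppose φ : [1,∞) → (0,∞) is concave, differentiable, and φ(v) = c·v/(log v)^α for all v ≥ v₀, with c > 0, α > 0. Then with r_φ(z) = φ(H_φ⁻¹(z)), H_φ(v) = ∫_1^v dx/φ(x), there exist positive constants C₁, C₂ such that C₁ ≤ r_φ(n) · n^{α/(1+α)} · exp(−(c(1+α)n)^{1/(1+α)}) ≤ C₂ for all large n. -/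
open Set Filter Real

set_option maxHeartbeats 1000000

open scoped NNReal in
lemma aux_rpow_add_le {a b p : ℝ} (ha : 0 ≤ a) (hb : 0 ≤ b) (hp : 0 ≤ p) (hp1 : p ≤ 1) :
    (a + b) ^ p ≤ a ^ p + b ^ p := by
  lift a to ℝ≥0 using ha
  lift b to ℝ≥0 using hb
  rw [← NNReal.coe_add, ← NNReal.coe_rpow, ← NNReal.coe_rpow, ← NNReal.coe_rpow,
    ← NNReal.coe_add, NNReal.coe_le_coe]
  exact NNReal.rpow_add_le_add_rpow a b hp hp1

/-- difference of rpow with exponent in (0,1] is controlled by rpow of the difference -/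
lemma aux_rpow_sub_le {a b p : ℝ} (ha : 0 ≤ a) (hab : a ≤ b) (hp : 0 ≤ p) (hp1 : p ≤ 1) :
    b ^ p - a ^ p ≤ (b - a) ^ p := by
  have h := aux_rpow_add_le ha (by linarith : (0:ℝ) ≤ b - a) hp hp1
  rw [add_sub_cancel] at h
  linarith

/-- Subexponential rates: if `φ` is concave, differentiable, positive, and
`φ(v) = c·v/(log v)^α` for `v ≥ v₀` with `c, α > 0`, then with `r_φ(z) = φ(H_φ⁻¹(z))`,
`r_φ(n) · n^{α/(1+α)} · exp(−(c(1+α)n)^{1/(1+α)})` is bounded above and below by positive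
constants for all large `n`. -/
theorem rphi_subexponential_rate (c α v₀ : ℝ) (hc : 0 < c) (hα : 0 < α) (hv₀ : 1 < v₀)
    (φ : ℝ → ℝ)
    (hpos : ∀ x ∈ Ici (1:ℝ), 0 < φ x)
    (hconc : ConcaveOn ℝ (Ici 1) φ)
    (hmono : MonotoneOn φ (Ici 1))
    (hdiff : DifferentiableOn ℝ φ (Ici 1))
    (hφ : ∀ v : ℝ, v₀ ≤ v → φ v = c * v / (Real.log v) ^ α)
    (H : ℝ → ℝ) (hH : ∀ v : ℝ, H v = ∫ x in (1:ℝ)..v, 1 / φ x)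
    (Hinv : ℝ → ℝ)
    (hinv_mem : ∀ z ∈ Ici (0:ℝ), Hinv z ∈ Ici (1:ℝ))
    (hinv_left : ∀ v ∈ Ici (1:ℝ), Hinv (H v) = v)
    (hinv_right : ∀ z ∈ Ici (0:ℝ), H (Hinv z) = z)
    (r : ℝ → ℝ) (hr : ∀ z : ℝ, r z = φ (Hinv z)) :
    ∃ C₁ C₂ : ℝ, 0 < C₁ ∧ 0 < C₂ ∧ ∀ᶠ n : ℕ in atTop,
      C₁ ≤ r n * (n : ℝ) ^ (α / (1 + α)) * Real.exp (-(c * (1 + α) * n) ^ (1 / (1 + α))) ∧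
      r n * (n : ℝ) ^ (α / (1 + α)) * Real.exp (-(c * (1 + α) * n) ^ (1 / (1 + α))) ≤ C₂ := by
  have h1α : (0:ℝ) < 1 + α := by linarith
  obtain ⟨β, hβ⟩ : ∃ β : ℝ, β = (1 + α)⁻¹ := ⟨_, rfl⟩
  have hβpos : 0 < β := hβ ▸ inv_pos.2 h1α
  have hβ1 : β ≤ 1 := by
    rw [hβ, inv_le_one_iff₀]; right; linarith
  obtain ⟨D, hD⟩ : ∃ D : ℝ, D = c * (1 + α) := ⟨_, rfl⟩
  have hDpos : 0 < D := by rw [hD]; positivity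
  -- continuity and integrability of 1/φ
  have hφcont : ContinuousOn φ (Ici 1) := hdiff.continuousOn
  have hinvcont : ContinuousOn (fun x => 1 / φ x) (Ici 1) :=
    continuousOn_const.div hφcont (fun x hx => (hpos x hx).ne')
  have hinteg : ∀ a b : ℝ, 1 ≤ a → 1 ≤ b →
      IntervalIntegrable (fun x => 1 / φ x) MeasureTheory.volume a b := by
    intro a b ha hb
    apply ContinuousOn.intervalIntegrable
    apply hinvcont.mono
    intro x hx
    rcases le_total a b with h | h
    · rw [uIcc_of_le h] at hx; exact le_trans ha hx.1
    · rw [uIcc_of_ge h] at hx; exact le_trans hb hx.1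
  have hHadd : ∀ a b : ℝ, 1 ≤ a → 1 ≤ b → H b = H a + ∫ x in a..b, 1 / φ x := by
    intro a b ha hb
    rw [hH a, hH b, intervalIntegral.integral_add_adjacent_intervals
      (hinteg 1 a le_rfl ha) (hinteg a b ha hb)]
  have hHmono : ∀ a b : ℝ, 1 ≤ a → a ≤ b → H a ≤ H b := by
    intro a b ha hab
    rw [hHadd a b ha (ha.trans hab)]
    have h0 : 0 ≤ ∫ x in a..b, 1 / φ x := by
      apply intervalIntegral.integral_nonneg hab
      intro x hx
      have : 0 < φ x := hpos x (le_trans ha hx.1)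
      positivity
    linarith
  have hlogv₀ : 0 < Real.log v₀ := Real.log_pos hv₀
  obtain ⟨K, hK⟩ : ∃ K : ℝ, K = H v₀ - (Real.log v₀) ^ (1 + α) / D := ⟨_, rfl⟩
  -- the closed form of H on [v₀, ∞)
  have hHform : ∀ v, v₀ ≤ v → H v = K + (Real.log v) ^ (1 + α) / D := by
    intro v hv
    have hv1 : (1:ℝ) ≤ v := le_trans hv₀.le hv
    rw [hHadd v₀ v hv₀.le hv1]
    have heq : EqOn (fun x => 1 / φ x) (fun x => (Real.log x) ^ α / (c * x)) (uIcc v₀ v) := by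
      intro x hx
      rw [uIcc_of_le hv] at hx
      have hx1 : (1:ℝ) < x := lt_of_lt_of_le hv₀ hx.1
      have hx0 : (0:ℝ) < x := lt_trans one_pos hx1
      have hlx : 0 < Real.log x := Real.log_pos hx1
      have hlxα : (0:ℝ) < (Real.log x) ^ α := Real.rpow_pos_of_pos hlx α
      simp only
      rw [hφ x hx.1]
      rw [one_div_div]
    rw [intervalIntegral.integral_congr heq]
    have hderiv : ∀ x ∈ uIcc v₀ v, HasDerivAt (fun y => (Real.log y) ^ (1 + α) / D)
        ((Real.log x) ^ α / (c * x)) x := by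
      intro x hx
      rw [uIcc_of_le hv] at hx
      have hx1 : (1:ℝ) < x := lt_of_lt_of_le hv₀ hx.1
      have hx0 : (0:ℝ) < x := lt_trans one_pos hx1
      have hlx : 0 < Real.log x := Real.log_pos hx1
      have h1 : HasDerivAt (fun y => (Real.log y) ^ (1 + α))
          (x⁻¹ * (1 + α) * (Real.log x) ^ ((1 + α) - 1)) x :=
        (Real.hasDerivAt_log hx0.ne').rpow_const (Or.inl hlx.ne')
      have h2 := h1.div_const D
      refine h2.congr_deriv ?_
      rw [add_sub_cancel_left]
      rw [hD]
      field_simp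
    have hcont2 : ContinuousOn (fun x => (Real.log x) ^ α / (c * x)) (uIcc v₀ v) := by
      apply ContinuousOn.div
      · apply ContinuousOn.rpow_const
        · apply Real.continuousOn_log.mono
          intro x hx
          rw [uIcc_of_le hv] at hx
          have : (0:ℝ) < x := lt_trans one_pos (lt_of_lt_of_le hv₀ hx.1)
          simp [this.ne']
        · intro x _; right; exact hα.le
      · exact (continuous_const.mul continuous_id).continuousOn
      · intro x hx
        rw [uIcc_of_le hv] at hx
        have : (0:ℝ) < x := lt_trans one_pos (lt_of_lt_of_le hv₀ hx.1)
        positivity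
    rw [intervalIntegral.integral_eq_sub_of_hasDerivAt hderiv (hcont2.intervalIntegrable)]
    rw [hK]
    ring
  -- constants
  obtain ⟨B, hB⟩ : ∃ B : ℝ, B = (D * |K|) ^ β := ⟨_, rfl⟩
  have hBnn : 0 ≤ B := hB ▸ Real.rpow_nonneg (by positivity) β
  refine ⟨c * Real.exp (-B) * (1 / (2 * D)) ^ (α * β),
          c * Real.exp B * (2 / D) ^ (α * β), ?_, ?_, ?_⟩
  · have : (0:ℝ) < (1 / (2 * D)) ^ (α * β) := Real.rpow_pos_of_pos (by positivity) _
    positivity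
  · have : (0:ℝ) < (2 / D) ^ (α * β) := Real.rpow_pos_of_pos (by positivity) _
    positivity
  obtain ⟨N, hN⟩ := exists_nat_gt (max (H v₀) (2 * |K| + 1))
  rw [eventually_atTop]
  refine ⟨N, fun n hn => ?_⟩
  set m : ℝ := (n : ℝ) with hm
  clear_value m
  have hNm : (N : ℝ) ≤ m := by rw [hm]; exact_mod_cast hn
  have hmH : H v₀ < m := lt_of_le_of_lt (le_max_left _ _) (lt_of_lt_of_le hN hNm)
  have hmK : 2 * |K| + 1 ≤ m := le_trans (le_max_right _ _) (le_of_lt (lt_of_lt_of_le hN hNm))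
  have hm1 : (1:ℝ) ≤ m := by
    have : (0:ℝ) ≤ 2 * |K| := by positivity
    linarith
  have hm0 : (0:ℝ) ≤ m := by linarith
  have hmKlow : m / 2 ≤ m - K := by
    have h1 : K ≤ |K| := le_abs_self K
    linarith
  have hmKhigh : m - K ≤ 2 * m := by
    have h1 : -|K| ≤ K := neg_abs_le K
    linarith
  have hmKpos : 0 < m - K := lt_of_lt_of_le (by linarith) hmKlow
  -- Hinv m ≥ v₀
  obtain ⟨w, hw⟩ : ∃ w : ℝ, w = Hinv m := ⟨_, rfl⟩
  have hw1 : (1:ℝ) ≤ w := hw ▸ hinv_mem m hm0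
  have hHw : H w = m := hw ▸ hinv_right m hm0
  have hwv₀ : v₀ ≤ w := by
    by_contra hcon
    push_neg at hcon
    have := hHmono w v₀ hw1 hcon.le
    rw [hHw] at this
    linarith
  have hw0 : (0:ℝ) < w := lt_of_lt_of_le one_pos hw1
  obtain ⟨L, hL⟩ : ∃ L : ℝ, L = Real.log w := ⟨_, rfl⟩
  have hL0 : 0 < L := hL ▸ Real.log_pos (lt_of_lt_of_le hv₀ hwv₀)
  -- L ^ (1+α) = D * (m - K)
  have hLpow : L ^ (1 + α) = D * (m - K) := by
    have h1 := hHform w hwv₀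
    rw [hHw] at h1
    rw [← hL] at h1
    field_simp [hDpos.ne'] at h1
    linarith
  have hLval : L = (D * (m - K)) ^ β := by
    rw [← hLpow, hβ, Real.rpow_rpow_inv hL0.le (ne_of_gt h1α)]
  -- r n = c * exp L / L ^ α
  have hrval : r m = c * Real.exp L / L ^ α := by
    rw [hr, ← hw, hφ w hwv₀, ← hL,
      show w = Real.exp L from by rw [hL, Real.exp_log hw0]]
  obtain ⟨M, hM⟩ : ∃ M : ℝ, M = (D * m) ^ β := ⟨_, rfl⟩
  -- |L - M| ≤ B
  have hLM : -B ≤ L - M ∧ L - M ≤ B := by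
    rcases le_or_gt 0 K with hK0 | hK0
    · have habs : |K| = K := abs_of_nonneg hK0
      have h1 : L ≤ M := by
        rw [hLval, hM]
        apply Real.rpow_le_rpow (by positivity) _ hβpos.le
        nlinarith
      have h2 : M - L ≤ B := by
        rw [hLval, hM, hB, habs]
        have := aux_rpow_sub_le (a := D * (m - K)) (b := D * m) (by positivity)
          (by nlinarith) hβpos.le hβ1
        have he : D * m - D * (m - K) = D * K := by ring
        rw [he] at this
        linarith
      constructor <;> linarith
    · have habs : |K| = -K := abs_of_neg hK0
      have h1 : M ≤ L := by
        rw [hLval, hM]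
        apply Real.rpow_le_rpow (by positivity) _ hβpos.le
        nlinarith
      have h2 : L - M ≤ B := by
        rw [hLval, hM, hB, habs]
        have := aux_rpow_sub_le (a := D * m) (b := D * (m - K)) (by positivity)
          (by nlinarith) hβpos.le hβ1
        have he : D * (m - K) - D * m = D * (-K) := by ring
        rw [he] at this
        linarith
      constructor <;> linarith
  -- the quotient Q
  obtain ⟨Q, hQ⟩ : ∃ Q : ℝ, Q = m / (D * (m - K)) := ⟨_, rfl⟩
  have hQlow : 1 / (2 * D) ≤ Q := by
    rw [hQ, div_le_div_iff₀ (by positivity) (by positivity)]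
    nlinarith [mul_le_mul_of_nonneg_left hmKhigh hDpos.le]
  have hQhigh : Q ≤ 2 / D := by
    rw [hQ, div_le_div_iff₀ (by positivity) hDpos]
    nlinarith [mul_le_mul_of_nonneg_left hmKlow hDpos.le]
  -- rewrite the main expression
  have hLα : L ^ α = (D * (m - K)) ^ (α * β) := by
    rw [hLval, ← Real.rpow_mul (by positivity), mul_comm β α]
  have hQval : Q ^ (α * β) = m ^ (α * β) / L ^ α := by
    rw [hQ, Real.div_rpow hm0 (by positivity), hLα]
  have hexp1 : α / (1 + α) = α * β := by rw [hβ]; ring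
  have hexp2 : (1:ℝ) / (1 + α) = β := by rw [hβ]; ring
  have hDm : c * (1 + α) * m = D * m := by rw [hD]
  have hEeq : r m * m ^ (α / (1 + α)) * Real.exp (-(c * (1 + α) * m) ^ (1 / (1 + α)))
      = c * Real.exp (L - M) * Q ^ (α * β) := by
    rw [hexp1, hexp2, hDm, ← hM, hrval, hQval, Real.exp_sub]
    have hLαpos : 0 < L ^ α := Real.rpow_pos_of_pos hL0 α
    have hexpM : 0 < Real.exp M := Real.exp_pos M
    rw [Real.exp_neg]
    field_simp
  rw [hEeq]
  have hQαβlow : (1 / (2 * D)) ^ (α * β) ≤ Q ^ (α * β) :=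
    Real.rpow_le_rpow (by positivity) hQlow (by positivity)
  have hQαβhigh : Q ^ (α * β) ≤ (2 / D) ^ (α * β) :=
    Real.rpow_le_rpow (le_trans (by positivity) hQlow) hQhigh (by positivity)
  have hexplow : Real.exp (-B) ≤ Real.exp (L - M) := Real.exp_le_exp.2 hLM.1
  have hexphigh : Real.exp (L - M) ≤ Real.exp B := Real.exp_le_exp.2 hLM.2
  constructor
  · have h1 : (0:ℝ) < (1 / (2 * D)) ^ (α * β) := Real.rpow_pos_of_pos (by positivity) _
    have h2 : (0:ℝ) < Real.exp (-B) := Real.exp_pos _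
    calc c * Real.exp (-B) * (1 / (2 * D)) ^ (α * β)
        ≤ c * Real.exp (L - M) * (1 / (2 * D)) ^ (α * β) := by
          apply mul_le_mul_of_nonneg_right _ h1.le
          exact mul_le_mul_of_nonneg_left hexplow hc.le
      _ ≤ c * Real.exp (L - M) * Q ^ (α * β) := by
          apply mul_le_mul_of_nonneg_left hQαβlow
          positivity
  · calc c * Real.exp (L - M) * Q ^ (α * β)
        ≤ c * Real.exp B * Q ^ (α * β) := by
          apply mul_le_mul_of_nonneg_right _ (le_trans (Real.rpow_pos_of_pos (by positivity) (α*β)).le hQαβlow)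
          exact mul_le_mul_of_nonneg_left hexphigh hc.le
      _ ≤ c * Real.exp B * (2 / D) ^ (α * β) := by
          apply mul_le_mul_of_nonneg_left hQαβhigh
          positivity
end

section
/- Let (X_n) and (X_n') be two coupled Markov chains on the same probability space with common transition kernel P, initial states x and x', and coupling time T = inf{k ≥ 1 : X_k = X_k'} such that X_k = X_k' for all k ≥ T. Then for any non-decreasing sequence r and any measurable f ≥ 0: ∑_{k=0}^∞ r(k)·‖P^k(x,·) − P^k(x',·)‖_f ≤ E[∑_{j=0}^{T−1} r(j)·(f(X_j) + f(X_j'))] (Lindvall's inequality). -/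
open MeasureTheory ProbabilityTheory Set
open scoped ENNReal

/-- Iterates of a Markov kernel: `kernelIter P 0 = id`, `kernelIter P (n+1) = P ∘ₖ kernelIter P n`. -/
noncomputable def kernelIter {X : Type*} [MeasurableSpace X] (P : Kernel X X) : ℕ → Kernel X X
  | 0 => Kernel.id
  | n + 1 => P.comp (kernelIter P n)

/-- The `f`-distance between two (finite) measures: `sup { |∫g dμ − ∫g dν| : |g| ≤ f }`. -/
noncomputable def fdist {X : Type*} [MeasurableSpace X] (f : X → ℝ) (μ ν : Measure X) : ℝ :=
  sSup { r : ℝ | ∃ g : X → ℝ, Measurable g ∧ (∀ x, |g x| ≤ f x) ∧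
    r = |(∫ x, g x ∂μ) - ∫ x, g x ∂ν| }

/-- Lindvall's inequality: for coupled chains `(X_n)`, `(X_n')` with common kernel `P`,
initial states `x`, `x'`, and coupling time `T`,
`∑_k r(k) ‖P^k(x,·) − P^k(x',·)‖_f ≤ E[∑_{j<T} r(j)(f(X_j)+f(X_j'))]`. -/
theorem lindvall_inequality {X : Type*} [MeasurableSpace X]
    (P : Kernel X X) [IsMarkovKernel P] (x x' : X)
    {Ω : Type*} [MeasurableSpace Ω] (μ : Measure Ω) [IsProbabilityMeasure μ]
    (Xc X'c : ℕ → Ω → X)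
    (hXm : ∀ k, Measurable (Xc k)) (hX'm : ∀ k, Measurable (X'c k))
    (hlaw : ∀ k, Measure.map (Xc k) μ = kernelIter P k x)
    (hlaw' : ∀ k, Measure.map (X'c k) μ = kernelIter P k x')
    (T : Ω → ℕ∞)
    (hT : ∀ ω, T ω = ⨅ (k : ℕ) (_ : 1 ≤ k ∧ Xc k ω = X'c k ω), (k : ℕ∞))
    (hcoal : ∀ ω (k : ℕ), T ω ≤ (k : ℕ∞) → Xc k ω = X'c k ω)
    (r : ℕ → ℝ) (hrm : Monotone r) (hr0 : ∀ n, 0 ≤ r n)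
    (f : X → ℝ) (hfm : Measurable f) (hf0 : ∀ y, 0 ≤ f y) :
    ∑' k : ℕ, ENNReal.ofReal (r k * fdist f (kernelIter P k x) (kernelIter P k x')) ≤
      ∫⁻ ω, ∑' j : ℕ, (if (j : ℕ∞) < T ω then
        ENNReal.ofReal (r j * (f (Xc j ω) + f (X'c j ω))) else 0) ∂μ := by

  set g' : ℕ → Ω → ℝ≥0∞ := fun k ω => if (k : ℕ∞) < T ω then
      ENNReal.ofReal (r k * (f (Xc k ω) + f (X'c k ω))) else 0 with hg'
  have key : ∀ k, ENNReal.ofReal (r k * fdist f (kernelIter P k x) (kernelIter P k x')) ≤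
      ∫⁻ ω, g' k ω ∂μ := by
    intro k
    set J : ℝ≥0∞ := ∫⁻ ω, (if (k : ℕ∞) < T ω then
        ENNReal.ofReal (f (Xc k ω) + f (X'c k ω)) else 0) ∂μ with hJ
    have hIk : ∫⁻ ω, g' k ω ∂μ = ENNReal.ofReal (r k) * J := by
      rw [hJ, ← lintegral_const_mul' _ _ ENNReal.ofReal_ne_top]
      congr 1; funext ω
      by_cases h : (k : ℕ∞) < T ω <;> simp [hg', h, ENNReal.ofReal_mul (hr0 k)]
    rw [hIk, ENNReal.ofReal_mul (hr0 k)]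
    apply mul_le_mul_right
    rcases eq_or_ne J ⊤ with hJt | hJt
    · exact hJt ▸ le_top
    · have hJ0 : (0:ℝ) ≤ J.toReal := ENNReal.toReal_nonneg
      have hsup : fdist f (kernelIter P k x) (kernelIter P k x') ≤ J.toReal := by
        apply Real.sSup_le _ hJ0
        rintro s ⟨g, hgm, hgf, rfl⟩
        rw [← hlaw k, ← hlaw' k,
          integral_map (hXm k).aemeasurable hgm.aestronglyMeasurable,
          integral_map (hX'm k).aemeasurable hgm.aestronglyMeasurable]
        set h : Ω → ℝ := fun ω => g (Xc k ω) - g (X'c k ω) with hh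
        have hhm : Measurable h := (hgm.comp (hXm k)).sub (hgm.comp (hX'm k))
        have hbound : ∀ ω, ENNReal.ofReal ‖h ω‖ ≤ (if (k : ℕ∞) < T ω then
            ENNReal.ofReal (f (Xc k ω) + f (X'c k ω)) else 0) := by
          intro ω
          by_cases hc : (k : ℕ∞) < T ω
          · simp only [hc, if_pos]
            apply ENNReal.ofReal_le_ofReal
            calc ‖h ω‖ = |g (Xc k ω) - g (X'c k ω)| := rfl
              _ ≤ |g (Xc k ω)| + |g (X'c k ω)| := abs_sub _ _
              _ ≤ f (Xc k ω) + f (X'c k ω) := add_le_add (hgf _) (hgf _)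
          · have hx : Xc k ω = X'c k ω := hcoal ω k (not_lt.mp hc)
            simp [hc, hh, hx]
        have hlin : ∫⁻ ω, ENNReal.ofReal ‖h ω‖ ∂μ ≤ J := hJ ▸ lintegral_mono hbound
        have hint : Integrable h μ := by
          refine ⟨hhm.aestronglyMeasurable, ?_⟩
          rw [hasFiniteIntegral_iff_norm]
          exact lt_of_le_of_lt hlin (lt_top_iff_ne_top.mpr hJt)
        by_cases hi : Integrable (fun ω => g (Xc k ω)) μ
        · have hi' : Integrable (fun ω => g (X'c k ω)) μ := by
            have heq : (fun ω => g (X'c k ω)) = (fun ω => g (Xc k ω)) - h := by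
              funext ω; simp [hh]
            rw [heq]; exact hi.sub hint
          rw [← integral_sub hi hi', ← Real.norm_eq_abs]
          calc ‖∫ ω, (g (Xc k ω) - g (X'c k ω)) ∂μ‖
              ≤ (∫⁻ ω, ENNReal.ofReal ‖h ω‖ ∂μ).toReal :=
                norm_integral_le_lintegral_norm h
            _ ≤ J.toReal := ENNReal.toReal_mono hJt hlin
        · have hi' : ¬ Integrable (fun ω => g (X'c k ω)) μ := by
            intro hi'
            apply hi
            have heq : (fun ω => g (Xc k ω)) = (fun ω => g (X'c k ω)) + h := by
              funext ω; simp [hh]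
            rw [heq]; exact hi'.add hint
          rw [integral_undef hi, integral_undef hi']
          simpa using hJ0
      calc ENNReal.ofReal _ ≤ ENNReal.ofReal J.toReal := ENNReal.ofReal_le_ofReal hsup
        _ = J := ENNReal.ofReal_toReal hJt
  have hsumle : ∀ (s : Finset ℕ), ∑ k ∈ s, ∫⁻ ω, g' k ω ∂μ ≤ ∫⁻ ω, ∑ k ∈ s, g' k ω ∂μ := by
    intro s
    induction s using Finset.induction with
    | empty => simp
    | @insert a s hks ih =>
      rw [Finset.sum_insert hks]
      calc (∫⁻ ω, g' a ω ∂μ) + ∑ k ∈ s, ∫⁻ ω, g' k ω ∂μ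
          ≤ (∫⁻ ω, g' a ω ∂μ) + ∫⁻ ω, ∑ k ∈ s, g' k ω ∂μ := add_le_add le_rfl ih
        _ ≤ ∫⁻ ω, (g' a ω + ∑ k ∈ s, g' k ω) ∂μ := le_lintegral_add _ _
        _ = ∫⁻ ω, ∑ k ∈ insert a s, g' k ω ∂μ := by
            congr 1; funext ω; rw [Finset.sum_insert hks]
  calc ∑' k, ENNReal.ofReal (r k * fdist f (kernelIter P k x) (kernelIter P k x'))
      ≤ ∑' k, ∫⁻ ω, g' k ω ∂μ := ENNReal.tsum_le_tsum key
    _ ≤ ∫⁻ ω, ∑' k, g' k ω ∂μ := by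
        rw [ENNReal.tsum_eq_iSup_sum]
        exact iSup_le fun s => (hsumle s).trans
          (lintegral_mono fun ω => ENNReal.sum_le_tsum s)
end

section
/- Let ε ∈ (0,1) and let (X_n, X_n') be a Markov chain on X × X with kernel P̌, and let N_n = ∑_{i=0}^n 1_{C×C}(X_i, X_i'). Construct the extended chain (X_n, X_n', d_n) on X × X × {0,1} where, whenever (X_n, X_n') ∈ C×C and d_n = 0, coupling occurs (d_{n+1} = 1) with probability ε independently, and otherwise the chain moves according to P̌ with d_{n+1} = d_n. Let T = inf{k ≥ 1 : d_k = 1}. Then for any non-negative function χ_n of (X_0,...,X_n, X_0',...,X_n'): Ẽ_{x,x',0}[χ_n·1{T > n}] = Ě_{x,x'}[χ_n·(1−ε)^{N_{n−1}}]. -/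
open MeasureTheory ProbabilityTheory Set Finset
open scoped ENNReal

private lemma prod_indicator_box' {ι : Type*} [Fintype ι] {α : Type*} (A : ι → Set α)
    (p : ι → α) :
    ∏ i, (A i).indicator (1 : α → ℝ≥0∞) (p i)
      = (Set.pi Set.univ A).indicator (1 : (ι → α) → ℝ≥0∞) p := by
  by_cases h : p ∈ Set.pi Set.univ A
  · rw [Set.indicator_of_mem h]
    exact Finset.prod_eq_one fun i _ => by
      rw [Set.indicator_of_mem (h i (Set.mem_univ i))]; rfl
  · rw [Set.indicator_of_notMem h]
    rw [Set.mem_univ_pi] at h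
    push_neg at h
    obtain ⟨i, hi⟩ := h
    exact Finset.prod_eq_zero (Finset.mem_univ i) (Set.indicator_of_notMem hi _)

/-- The fundamental coupling identity: for the extended chain `(X_n, X_n', d_n)` in which,
at each joint visit to `C × C` with `d_n = 0`, coupling occurs with probability `ε` and
otherwise the bivariate chain moves according to `P̌`, one has, for every adapted
non-negative path functional `χ_n`,
`Ẽ_{x,x',0}[χ_n 1{T > n}] = Ě_{x,x'}[χ_n (1−ε)^{N_{n−1}}]`. -/
theorem coupling_fundamental_identity {X : Type*} [MeasurableSpace X]
    (Pc : Kernel (X × X) (X × X)) [IsMarkovKernel Pc]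
    (C : Set X) (hC : MeasurableSet C) (ε : ℝ≥0∞) (hε0 : 0 < ε) (hε1 : ε < 1)
    (x x' : X)
    -- the extended chain `(X̃_n, X̃'_n, d_n)` on a probability space `Ω̃`
    {Ωt : Type*} [MeasurableSpace Ωt] (μt : Measure Ωt) [IsProbabilityMeasure μt]
    (Xt X't : ℕ → Ωt → X) (d : ℕ → Ωt → Bool)
    (hXtm : ∀ n, Measurable (Xt n)) (hX'tm : ∀ n, Measurable (X't n))
    (hdm : ∀ n, Measurable (d n))
    (hinit_t : ∀ᵐ ω ∂μt, Xt 0 ω = x ∧ X't 0 ω = x' ∧ d 0 ω = false)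
    (habs : ∀ᵐ ω ∂μt, ∀ n, d n ω = true → d (n + 1) ω = true)
    (hdyn : ∀ (n : ℕ) (g : X × X → ℝ≥0∞) (h : (Fin (n + 1) → X × X) → ℝ≥0∞),
      Measurable g → Measurable h →
      ∫⁻ ω, (if d n ω = false ∧ d (n + 1) ω = false then
          g (Xt (n + 1) ω, X't (n + 1) ω) else 0) *
          h (fun i => (Xt i ω, X't i ω)) ∂μt =
      ∫⁻ ω, (if d n ω = false then
          (1 - ε * Set.indicator (C ×ˢ C) (fun _ => (1 : ℝ≥0∞)) (Xt n ω, X't n ω)) *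
          ∫⁻ y, g y ∂(Pc (Xt n ω, X't n ω)) else 0) *
          h (fun i => (Xt i ω, X't i ω)) ∂μt)
    -- the bivariate chain `(X̌_n, X̌'_n)` with kernel `P̌` on a probability space `Ω̌`
    {Ωc : Type*} [MeasurableSpace Ωc] (μc : Measure Ωc) [IsProbabilityMeasure μc]
    (Yc Y'c : ℕ → Ωc → X)
    (hYm : ∀ n, Measurable (Yc n)) (hY'm : ∀ n, Measurable (Y'c n))
    (hinit_c : ∀ᵐ ω ∂μc, Yc 0 ω = x ∧ Y'c 0 ω = x')
    (hmarkov_c : ∀ (n : ℕ) (g : X × X → ℝ≥0∞) (h : (Fin (n + 1) → X × X) → ℝ≥0∞),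
      Measurable g → Measurable h →
      ∫⁻ ω, g (Yc (n + 1) ω, Y'c (n + 1) ω) * h (fun i => (Yc i ω, Y'c i ω)) ∂μc =
      ∫⁻ ω, (∫⁻ y, g y ∂(Pc (Yc n ω, Y'c n ω))) * h (fun i => (Yc i ω, Y'c i ω)) ∂μc)
    -- the coupling time and the number of visits to `C × C`
    (T : Ωt → ℕ∞)
    (hT : ∀ ω, T ω = ⨅ (k : ℕ) (_ : 1 ≤ k ∧ d k ω = true), (k : ℕ∞))
    (N : ℕ → Ωc → ℕ)
    (hN : ∀ n ω, N n ω = ∑ i ∈ Finset.range n,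
      Set.indicator (C ×ˢ C) (fun _ => 1) (Yc i ω, Y'c i ω)) :
    ∀ (n : ℕ) (χ : (Fin (n + 1) → X × X) → ℝ≥0∞), Measurable χ →
      ∫⁻ ω, χ (fun i => (Xt i ω, X't i ω)) * (if (n : ℕ∞) < T ω then 1 else 0) ∂μt =
      ∫⁻ ω, χ (fun i => (Yc i ω, Y'c i ω)) * (1 - ε) ^ (N n ω) ∂μc := by
  -- measurability of the visit-count and the density
  have hindN : Measurable ((C ×ˢ C).indicator (fun _ => (1 : ℕ))) :=
    measurable_const.indicator (hC.prod hC)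
  have hNm : ∀ n, Measurable (N n) := by
    intro n
    have hfe : N n = fun ω => ∑ i ∈ Finset.range n,
        (C ×ˢ C).indicator (fun _ => (1 : ℕ)) (Yc i ω, Y'c i ω) := funext (hN n)
    rw [hfe]
    exact Finset.measurable_sum _ fun i _ => hindN.comp ((hYm i).prodMk (hY'm i))
  have hpow : ∀ n, Measurable fun ω => (1 - ε) ^ (N n ω) := fun n =>
    (measurable_from_top (f := fun k : ℕ => (1 - ε) ^ k)).comp (hNm n)
  -- the key intermediate identity, with `{T > n}` replaced by `{d n = false}`
  have key : ∀ (n : ℕ) (χ : (Fin (n + 1) → X × X) → ℝ≥0∞), Measurable χ →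
      ∫⁻ ω, (if d n ω = false then χ (fun i => (Xt i ω, X't i ω)) else 0) ∂μt =
      ∫⁻ ω, χ (fun i => (Yc i ω, Y'c i ω)) * (1 - ε) ^ (N n ω) ∂μc := by
    intro n
    induction n with
    | zero =>
      intro χ hχ
      have h1 : ∫⁻ ω, (if d 0 ω = false then χ (fun i => (Xt i ω, X't i ω)) else 0) ∂μt
          = ∫⁻ _ω, χ (fun _ => (x, x')) ∂μt := by
        refine lintegral_congr_ae (hinit_t.mono fun ω hω => ?_)
        dsimp only
        obtain ⟨h0, h0', hd⟩ := hω
        rw [if_pos hd]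
        congr 1
        funext i
        have hi : (i : ℕ) = 0 := Nat.lt_one_iff.mp i.isLt
        rw [hi, h0, h0']
      have h2 : ∫⁻ ω, χ (fun i => (Yc i ω, Y'c i ω)) * (1 - ε) ^ (N 0 ω) ∂μc
          = ∫⁻ _ω, χ (fun _ => (x, x')) ∂μc := by
        refine lintegral_congr_ae (hinit_c.mono fun ω hω => ?_)
        dsimp only
        obtain ⟨h0, h0'⟩ := hω
        have hN0 : N 0 ω = 0 := by rw [hN 0 ω, Finset.sum_range_zero]
        rw [hN0, pow_zero, mul_one]
        congr 1
        funext i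
        have hi : (i : ℕ) = 0 := Nat.lt_one_iff.mp i.isLt
        rw [hi, h0, h0']
      rw [h1, h2, lintegral_const, lintegral_const, measure_univ, measure_univ]
    | succ n IH =>
      -- measurable path maps
      have hPtm : Measurable (fun ω => (fun i : Fin (n + 2) => (Xt i ω, X't i ω))) :=
        measurable_pi_lambda _ fun i => (hXtm i).prodMk (hX'tm i)
      have hPcm : Measurable (fun ω => (fun i : Fin (n + 2) => (Yc i ω, Y'c i ω))) :=
        measurable_pi_lambda _ fun i => (hYm i).prodMk (hY'm i)
      have hSm : MeasurableSet {ω | d (n + 1) ω = false} :=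
        (hdm (n + 1)) (measurableSet_singleton false)
      -- the two image measures
      set μ₁ : Measure (Fin (n + 2) → X × X) :=
        Measure.map (fun ω i => (Xt i ω, X't i ω))
          (μt.restrict {ω | d (n + 1) ω = false}) with hμ₁_def
      set μ₂ : Measure (Fin (n + 2) → X × X) :=
        Measure.map (fun ω i => (Yc i ω, Y'c i ω))
          (μc.withDensity fun ω => (1 - ε) ^ (N (n + 1) ω)) with hμ₂_def
      have conv₁ : ∀ (χ : (Fin (n + 2) → X × X) → ℝ≥0∞), Measurable χ →
          ∫⁻ p, χ p ∂μ₁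
            = ∫⁻ ω, (if d (n + 1) ω = false then χ (fun i => (Xt i ω, X't i ω)) else 0) ∂μt := by
        intro χ hχ
        rw [hμ₁_def, lintegral_map hχ hPtm,
          ← lintegral_indicator (f := fun ω => χ (fun i => (Xt i ω, X't i ω))) hSm]
        refine lintegral_congr fun ω => ?_
        simp only [Set.indicator_apply, Set.mem_setOf_eq]
      have conv₂ : ∀ (χ : (Fin (n + 2) → X × X) → ℝ≥0∞), Measurable χ →
          ∫⁻ p, χ p ∂μ₂
            = ∫⁻ ω, χ (fun i => (Yc i ω, Y'c i ω)) * (1 - ε) ^ (N (n + 1) ω) ∂μc := by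
        intro χ hχ
        rw [hμ₂_def, lintegral_map hχ hPcm,
          lintegral_withDensity_eq_lintegral_mul μc (hpow (n + 1))
            (show Measurable fun ω => χ (fun i : Fin (n + 2) => (Yc i ω, Y'c i ω)) from
              hχ.comp hPcm)]
        refine lintegral_congr fun ω => ?_
        simp only [Pi.mul_apply]
        exact mul_comm _ _
      -- the box identity
      have hbox : ∀ A : Fin (n + 2) → Set (X × X), (∀ i, MeasurableSet (A i)) →
          μ₁ (Set.pi Set.univ A) = μ₂ (Set.pi Set.univ A) := by
        intro A hA
        have hBm : MeasurableSet (Set.pi Set.univ A) := MeasurableSet.univ_pi hA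
        set g : X × X → ℝ≥0∞ := (A (Fin.last (n + 1))).indicator 1 with hg_def
        set h : (Fin (n + 1) → X × X) → ℝ≥0∞ :=
          fun p => ∏ i : Fin (n + 1), (A i.castSucc).indicator 1 (p i) with hh_def
        have hgm : Measurable g := measurable_const.indicator (hA _)
        have hhm : Measurable h := Finset.measurable_prod _ fun i _ =>
          (measurable_const.indicator (hA _)).comp (measurable_pi_apply i)
        have hfact : ∀ (q : Fin (n + 2) → X × X),
            (Set.pi Set.univ A).indicator (1 : (Fin (n + 2) → X × X) → ℝ≥0∞) q
              = g (q (Fin.last (n + 1))) * h (fun i : Fin (n + 1) => q i.castSucc) := by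
          intro q
          rw [← prod_indicator_box' A q, hg_def, hh_def, Fin.prod_univ_castSucc, mul_comm]
        -- step 1: express `μ₁ (box)` in the form of the LHS of `hdyn`
        have step1 : μ₁ (Set.pi Set.univ A)
            = ∫⁻ ω, (if d n ω = false ∧ d (n + 1) ω = false then
                g (Xt (n + 1) ω, X't (n + 1) ω) else 0) *
                h (fun i : Fin (n + 1) => (Xt i ω, X't i ω)) ∂μt := by
          rw [← lintegral_indicator_one hBm,
            conv₁ ((Set.pi Set.univ A).indicator 1) (measurable_one.indicator hBm)]
          refine lintegral_congr_ae (habs.mono fun ω hω => ?_)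
          dsimp only
          by_cases h1 : d (n + 1) ω = false
          · have h0 : d n ω = false := by
              cases hdn : d n ω with
              | false => rfl
              | true => rw [hω n hdn] at h1; exact absurd h1 (by simp)
            rw [if_pos h1, if_pos ⟨h0, h1⟩]
            have hq := hfact (fun i : Fin (n + 2) => (Xt i ω, X't i ω))
            simp only [Fin.val_last, Fin.coe_castSucc] at hq
            exact hq
          · rw [if_neg h1, if_neg (fun hc => h1 hc.2), zero_mul]
        -- auxiliary: the visit count as a function of the path
        set Np : (Fin (n + 1) → X × X) → ℕ := fun p => ∑ i : Fin (n + 1),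
          (if (i : ℕ) < n then (C ×ˢ C).indicator (fun _ => (1 : ℕ)) (p i) else 0)
          with hNp_def
        have hNpm : Measurable Np := by
          refine Finset.measurable_sum _ fun i _ => ?_
          by_cases hi : (i : ℕ) < n
          · simp only [if_pos hi]
            exact hindN.comp (measurable_pi_apply i)
          · simp only [if_neg hi]
            exact measurable_const
        have hNp : ∀ ω, Np (fun i : Fin (n + 1) => (Yc i ω, Y'c i ω)) = N n ω := by
          intro ω
          rw [hN n ω, hNp_def]
          dsimp only
          rw [Fin.sum_univ_eq_sum_range
            (fun k => if k < n then (C ×ˢ C).indicator (fun _ => (1 : ℕ)) (Yc k ω, Y'c k ω) else 0)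
            (n + 1)]
          rw [Finset.sum_range_succ, if_neg (lt_irrefl n), add_zero]
          exact Finset.sum_congr rfl fun i hi => if_pos (Finset.mem_range.mp hi)
        -- the function to feed to the induction hypothesis
        set χ' : (Fin (n + 1) → X × X) → ℝ≥0∞ := fun p =>
          ((1 - ε * (C ×ˢ C).indicator (fun _ => (1 : ℝ≥0∞)) (p (Fin.last n))) *
            ∫⁻ y, g y ∂(Pc (p (Fin.last n)))) * h p with hχ'_def
        have hχ'm : Measurable χ' := by
          refine Measurable.mul (Measurable.mul ?_ ?_) hhm
          · exact measurable_const.sub (measurable_const.mul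
              ((measurable_const.indicator (hC.prod hC)).comp (measurable_pi_apply _)))
          · exact (Measurable.lintegral_kernel hgm).comp (measurable_pi_apply _)
        have step3 : ∫⁻ ω, (if d n ω = false then
              (1 - ε * (C ×ˢ C).indicator (fun _ => (1 : ℝ≥0∞)) (Xt n ω, X't n ω)) *
              ∫⁻ y, g y ∂(Pc (Xt n ω, X't n ω)) else 0) *
              h (fun i : Fin (n + 1) => (Xt i ω, X't i ω)) ∂μt
            = ∫⁻ ω, (if d n ω = false then
                χ' (fun i : Fin (n + 1) => (Xt i ω, X't i ω)) else 0) ∂μt := by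
          refine lintegral_congr fun ω => ?_
          by_cases h0 : d n ω = false
          · rw [if_pos h0, if_pos h0, hχ'_def]
            simp only [Fin.val_last]
          · rw [if_neg h0, if_neg h0, zero_mul]
        -- the function to feed to the Markov property of the bivariate chain
        set h₂ : (Fin (n + 1) → X × X) → ℝ≥0∞ := fun p =>
          ((1 - ε * (C ×ˢ C).indicator (fun _ => (1 : ℝ≥0∞)) (p (Fin.last n))) * h p) *
            (1 - ε) ^ (Np p) with hh₂_def
        have hh₂m : Measurable h₂ := by
          refine Measurable.mul (Measurable.mul ?_ hhm)
            ((measurable_from_top (f := fun k : ℕ => (1 - ε) ^ k)).comp hNpm)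
          exact measurable_const.sub (measurable_const.mul
            ((measurable_const.indicator (hC.prod hC)).comp (measurable_pi_apply _)))
        have step4 : ∫⁻ ω, χ' (fun i : Fin (n + 1) => (Yc i ω, Y'c i ω)) *
              (1 - ε) ^ (N n ω) ∂μc
            = ∫⁻ ω, (∫⁻ y, g y ∂(Pc (Yc n ω, Y'c n ω))) *
              h₂ (fun i : Fin (n + 1) => (Yc i ω, Y'c i ω)) ∂μc := by
          refine lintegral_congr fun ω => ?_
          rw [hχ'_def, hh₂_def]
          simp only [Fin.val_last, hNp ω]
          ring
        -- the single-step factor identity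
        have hfac : ∀ ω, (1 - ε) ^ (N (n + 1) ω)
            = (1 - ε) ^ (N n ω) *
              (1 - ε * (C ×ˢ C).indicator (fun _ => (1 : ℝ≥0∞)) (Yc n ω, Y'c n ω)) := by
          intro ω
          have hstep : N (n + 1) ω = N n ω +
              (C ×ˢ C).indicator (fun _ => (1 : ℕ)) (Yc n ω, Y'c n ω) := by
            rw [hN (n + 1) ω, hN n ω, Finset.sum_range_succ]
          rw [hstep, pow_add]
          congr 1
          by_cases hmem : (Yc n ω, Y'c n ω) ∈ C ×ˢ C
          · rw [Set.indicator_of_mem hmem, Set.indicator_of_mem hmem, pow_one, mul_one]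
          · rw [Set.indicator_of_notMem hmem, Set.indicator_of_notMem hmem, pow_zero,
              mul_zero, tsub_zero]
        have step6 : ∫⁻ ω, g (Yc (n + 1) ω, Y'c (n + 1) ω) *
              h₂ (fun i : Fin (n + 1) => (Yc i ω, Y'c i ω)) ∂μc
            = ∫⁻ ω, (Set.pi Set.univ A).indicator
                (1 : (Fin (n + 2) → X × X) → ℝ≥0∞) (fun i : Fin (n + 2) => (Yc i ω, Y'c i ω)) *
                (1 - ε) ^ (N (n + 1) ω) ∂μc := by
          refine lintegral_congr fun ω => ?_
          have hq := hfact (fun i : Fin (n + 2) => (Yc i ω, Y'c i ω))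
          simp only [Fin.val_last, Fin.coe_castSucc] at hq
          rw [hq]
          simp only [hh₂_def]
          rw [hfac ω, hNp ω]
          simp only [Fin.val_last]
          ring
        calc μ₁ (Set.pi Set.univ A)
            = _ := step1
          _ = _ := hdyn n g h hgm hhm
          _ = _ := step3
          _ = _ := IH χ' hχ'm
          _ = _ := step4
          _ = _ := (hmarkov_c n g h₂ hgm hh₂m).symm
          _ = _ := step6
          _ = μ₂ (Set.pi Set.univ A) := by
            rw [← conv₂ ((Set.pi Set.univ A).indicator 1) (measurable_one.indicator hBm),
              lintegral_indicator_one hBm]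
      -- finiteness of the two measures
      have hfinw : IsFiniteMeasure (μc.withDensity fun ω => (1 - ε) ^ (N (n + 1) ω)) := by
        refine isFiniteMeasure_withDensity ?_
        have hle : ∫⁻ ω, (1 - ε) ^ (N (n + 1) ω) ∂μc ≤ ∫⁻ _ω, 1 ∂μc :=
          lintegral_mono fun ω => pow_le_one' tsub_le_self _
        simp only [lintegral_one, measure_univ] at hle
        exact (lt_of_le_of_lt hle ENNReal.one_lt_top).ne
      have hfin₁ : IsFiniteMeasure μ₁ := by
        rw [hμ₁_def]
        infer_instance
      -- the two measures agree
      have hμeq : μ₁ = μ₂ := by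
        refine ext_of_generate_finite _ generateFrom_pi.symm isPiSystem_pi ?_ ?_
        · rintro _ ⟨A, hA, rfl⟩
          exact hbox A fun i => hA i (Set.mem_univ i)
        · have := hbox (fun _ => Set.univ) (fun _ => MeasurableSet.univ)
          simpa [Set.pi_univ] using this
      intro χ hχ
      rw [← conv₁ χ hχ, hμeq, conv₂ χ hχ]
  -- conclude: a.e., `n < T ω ↔ d n ω = false`
  intro n χ hχ
  have hae : ∀ᵐ ω ∂μt, ((n : ℕ∞) < T ω ↔ d n ω = false) := by
    filter_upwards [habs, hinit_t] with ω hω h0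
    obtain ⟨-, -, h0⟩ := h0
    have mono : ∀ j k, j ≤ k → d j ω = true → d k ω = true := by
      intro j k hjk hj
      induction k, hjk using Nat.le_induction with
      | base => exact hj
      | succ k hk ih => exact hω k ih
    rw [hT ω]
    constructor
    · intro hlt
      by_contra hne
      have hdn : d n ω = true := by
        cases hdn : d n ω with
        | false => exact absurd hdn hne
        | true => rfl
      have hn0 : 1 ≤ n := by
        rcases Nat.eq_zero_or_pos n with h | h
        · rw [h] at hdn; rw [h0] at hdn; exact absurd hdn (by simp)
        · exact h
      have hle : (⨅ (k : ℕ) (_ : 1 ≤ k ∧ d k ω = true), (k : ℕ∞)) ≤ (n : ℕ∞) :=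
        iInf₂_le n ⟨hn0, hdn⟩
      exact absurd hle (not_le.mpr hlt)
    · intro hdn
      have hlt1 : (n : ℕ∞) < ((n + 1 : ℕ) : ℕ∞) := by
        exact_mod_cast Nat.lt_succ_self n
      refine lt_of_lt_of_le hlt1 (le_iInf₂ fun k hk => ?_)
      obtain ⟨hk1, hktrue⟩ := hk
      have hkn : n + 1 ≤ k := by
        by_contra hcon
        push_neg at hcon
        have : d n ω = true := mono k n (by omega) hktrue
        rw [hdn] at this
        exact absurd this (by simp)
      exact_mod_cast hkn
  have hcong : ∫⁻ ω, χ (fun i => (Xt i ω, X't i ω)) * (if (n : ℕ∞) < T ω then 1 else 0) ∂μt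
      = ∫⁻ ω, (if d n ω = false then χ (fun i => (Xt i ω, X't i ω)) else 0) ∂μt := by
    refine lintegral_congr_ae (hae.mono fun ω hω => ?_)
    dsimp only
    by_cases hlt : (n : ℕ∞) < T ω
    · rw [if_pos hlt, mul_one, if_pos (hω.1 hlt)]
    · rw [if_neg hlt, mul_zero, if_neg]
      intro hf
      exact hlt (hω.2 hf)
  rw [hcong, key n χ hχ]
end

section
/- Under the minorization condition (existence of ε ∈ (0,1) and ν with P(x,·) ≥ εν for x ∈ C), with the coupling construction above, let σ_j denote the time of the (j+1)-th visit of the bivariate chain to C×C and T the coupling time. Then for any subgeometric sequence r: Ẽ_{x,x',0}[r(T−1)] = ε·∑_{j=0}^∞ (1−ε)^j · Ě_{x,x'}[r(σ_j)]. -/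
open MeasureTheory ProbabilityTheory Set Finset Filter
open scoped ENNReal

/-- Evaluation of a non-decreasing sequence at an extended natural time
(with value `sup r` at `∞`). -/
noncomputable def rext (r : ℕ → ℝ) (t : ℕ∞) : ℝ≥0∞ :=
  ⨆ (n : ℕ) (_ : (n : ℕ∞) ≤ t), ENNReal.ofReal (r n)

/-! ### Auxiliary lemmas -/

noncomputable def rdelta (r : ℕ → ℝ) : ℕ → ℝ≥0∞
  | 0 => ENNReal.ofReal (r 0)
  | (n+1) => ENNReal.ofReal (r (n+1)) - ENNReal.ofReal (r n)

lemma rdelta_sum (r : ℕ → ℝ) (hr : Monotone r) (m : ℕ) :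
    ∑ n ∈ Finset.range (m+1), rdelta r n = ENNReal.ofReal (r m) := by
  induction m with
  | zero => simp [rdelta]
  | succ m ih =>
      rw [Finset.sum_range_succ, ih, rdelta]
      rw [add_comm]
      exact tsub_add_cancel_of_le (ENNReal.ofReal_le_ofReal (hr (Nat.le_succ m)))

lemma rext_coe (r : ℕ → ℝ) (hr : Monotone r) (m : ℕ) :
    rext r (m : ℕ∞) = ENNReal.ofReal (r m) := by
  apply le_antisymm
  · refine iSup₂_le fun n hn => ?_
    exact ENNReal.ofReal_le_ofReal (hr (Nat.cast_le.mp hn))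
  · exact le_iSup₂ (f := fun (n : ℕ) (_ : (n:ℕ∞) ≤ (m:ℕ∞)) => ENNReal.ofReal (r n)) m le_rfl

lemma rext_top (r : ℕ → ℝ) : rext r ⊤ = ⨆ n, ENNReal.ofReal (r n) := by
  simp [rext]

lemma rext_eq_tsum (r : ℕ → ℝ) (hr : Monotone r) (t : ℕ∞) :
    rext r t = ∑' n : ℕ, (if (n : ℕ∞) ≤ t then rdelta r n else 0) := by
  cases t with
  | top =>
      simp only [le_top, if_true]
      rw [rext_top, ENNReal.tsum_eq_iSup_nat]
      apply le_antisymm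
      · exact iSup_le fun n => le_iSup_of_le (n+1) (by rw [rdelta_sum r hr n])
      · refine iSup_le fun k => ?_
        cases k with
        | zero => simp
        | succ m => rw [rdelta_sum r hr m]; exact le_iSup_of_le m le_rfl
  | coe m =>
      rw [rext_coe r hr m, ← rdelta_sum r hr m]
      rw [tsum_eq_sum (s := Finset.range (m+1)) (by
        intro n hn
        rw [if_neg]
        simp only [Finset.mem_range, not_lt] at hn
        exact fun h => absurd (Nat.cast_le.mp h) (by omega))]
      apply Finset.sum_congr rfl
      intro n hn
      rw [if_pos (Nat.cast_le.mpr (by simpa [Nat.lt_succ_iff] using hn))]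

lemma enat_le_sub_one_iff {t : ℕ∞} (ht : 1 ≤ t) (n : ℕ) :
    (n : ℕ∞) ≤ t - 1 ↔ (n : ℕ∞) + 1 ≤ t := by
  cases t with
  | top => simp
  | coe m =>
      have hm : 1 ≤ m := by exact_mod_cast ht
      rw [show ((m : ℕ∞) - 1) = ((m - 1 : ℕ) : ℕ∞) by
        rw [← Nat.cast_one, ← ENat.coe_sub]]
      rw [show ((n : ℕ∞) + 1) = ((n + 1 : ℕ) : ℕ∞) by push_cast; ring]
      rw [Nat.cast_le, Nat.cast_le]
      omega

section count
variable {Ω : Type*} (A : ℕ → Ω → Prop)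

noncomputable def ncount [∀ n ω, Decidable (A n ω)] (n : ℕ) (ω : Ω) : ℕ :=
  ∑ k ∈ Finset.range n, if A k ω then 1 else 0

variable [∀ n ω, Decidable (A n ω)]

lemma ncount_succ (n : ℕ) (ω : Ω) :
    ncount A (n+1) ω = ncount A n ω + if A n ω then 1 else 0 :=
  Finset.sum_range_succ _ n

lemma ncount_mono (ω : Ω) : Monotone fun n => ncount A n ω := by
  intro a b hab
  exact Finset.sum_le_sum_of_subset (Finset.range_subset_range.mpr hab)

lemma ncount_exists {j n : ℕ} {ω : Ω} (h : j + 1 ≤ ncount A n ω) :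
    ∃ m < n, A m ω ∧ ncount A m ω = j := by
  induction n with
  | zero => simp [ncount] at h
  | succ n ih =>
      rw [ncount_succ] at h
      by_cases hc : j + 1 ≤ ncount A n ω
      · obtain ⟨m, hm, h1, h2⟩ := ih hc
        exact ⟨m, by omega, h1, h2⟩
      · by_cases hA : A n ω
        · simp only [hA, if_true] at h
          exact ⟨n, by omega, hA, by omega⟩
        · simp only [hA, if_false] at h; omega
end count

section sigma
variable {Ω : Type*} (A : ℕ → Ω → Prop) [∀ n ω, Decidable (A n ω)]
  (σ : ℕ → Ω → ℕ∞)
  (h0 : ∀ ω, σ 0 ω = ⨅ (n : ℕ) (_ : A n ω), (n : ℕ∞))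
  (hs : ∀ (j : ℕ) (ω : Ω), σ (j + 1) ω =
      ⨅ (n : ℕ) (_ : σ j ω < (n : ℕ∞) ∧ A n ω), (n : ℕ∞))

lemma one_le_ncount {k n : ℕ} {ω : Ω} (hA : A k ω) (hk : k < n) : 1 ≤ ncount A n ω := by
  calc 1 = if A k ω then 1 else 0 := by simp [hA]
  _ ≤ ncount A n ω :=
      Finset.single_le_sum (f := fun k => if A k ω then 1 else 0)
        (fun _ _ => Nat.zero_le _) (Finset.mem_range.mpr hk)

include h0 hs in
lemma sigma_eq {j m : ℕ} {ω : Ω} (hA : A m ω) (hN : ncount A m ω = j) :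
    σ j ω = (m : ℕ∞) := by
  induction j generalizing m with
  | zero =>
      rw [h0]
      apply le_antisymm
      · exact iInf₂_le m hA
      · refine le_iInf₂ fun k hk => Nat.cast_le.mpr ?_
        by_contra hlt
        have := one_le_ncount A hk (by omega : k < m)
        omega
  | succ j ih =>
      obtain ⟨m', hm', hA', hN'⟩ := ncount_exists A (by omega : j + 1 ≤ ncount A m ω)
      have hσj := ih hA' hN'
      rw [hs]
      apply le_antisymm
      · exact iInf₂_le m ⟨by rw [hσj]; exact_mod_cast hm', hA⟩
      · refine le_iInf₂ fun k hk => Nat.cast_le.mpr ?_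
        obtain ⟨h1, h2⟩ := hk
        rw [hσj, Nat.cast_lt] at h1
        by_contra hlt
        push_neg at hlt
        have e1 : ncount A (m' + 1) ω = j + 1 := by rw [ncount_succ]; simp [hA', hN']
        have e2 : ncount A (m' + 1) ω ≤ ncount A k ω := ncount_mono A ω (by omega)
        have e3 : ncount A (k + 1) ω = ncount A k ω + 1 := by
          rw [ncount_succ]; simp [h2]
        have e4 : ncount A (k + 1) ω ≤ ncount A m ω := ncount_mono A ω (by omega)
        omega

include h0 hs in
lemma sigma_lt {j n : ℕ} {ω : Ω} (h : σ j ω < (n : ℕ∞)) : j + 1 ≤ ncount A n ω := by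
  induction j generalizing n with
  | zero =>
      rw [h0] at h
      simp only [iInf_lt_iff, Nat.cast_lt] at h
      obtain ⟨k, hk, hkn⟩ := h
      exact one_le_ncount A hk hkn
  | succ j ih =>
      rw [hs] at h
      simp only [iInf_lt_iff, Nat.cast_lt] at h
      obtain ⟨k, ⟨h1, h2⟩, hkn⟩ := h
      have := ih h1
      have e3 : ncount A (k + 1) ω = ncount A k ω + 1 := by rw [ncount_succ]; simp [h2]
      have e4 : ncount A (k + 1) ω ≤ ncount A n ω := ncount_mono A ω (by omega)
      omega

include h0 hs in
lemma le_sigma_iff (j n : ℕ) (ω : Ω) :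
    (n : ℕ∞) ≤ σ j ω ↔ ncount A n ω ≤ j := by
  constructor
  · intro h
    by_contra hc
    obtain ⟨m, hm, hA, hN⟩ := ncount_exists A (by omega : j + 1 ≤ ncount A n ω)
    rw [sigma_eq A σ h0 hs hA hN, Nat.cast_le] at h
    omega
  · intro h
    by_contra hc
    have := sigma_lt A σ h0 hs (not_le.mp hc)
    omega

end sigma

lemma lintegral_ite_const {Ω : Type*} [MeasurableSpace Ω] (μ : Measure Ω)
    (p : Ω → Prop) [∀ ω, Decidable (p ω)] (hp : MeasurableSet {ω | p ω}) (c : ℝ≥0∞) :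
    ∫⁻ ω, (if p ω then c else 0) ∂μ = c * μ {ω | p ω} := by
  have h : ∀ ω, (if p ω then c else 0) = {ω | p ω}.indicator (fun _ => c) ω := by
    intro ω; by_cases h : p ω <;> simp [Set.indicator_apply, h]
  simp_rw [h]
  rw [lintegral_indicator hp, setLIntegral_const]
lemma main_induction {X : Type*} [MeasurableSpace X]
    (Pc : Kernel (X × X) (X × X)) [IsMarkovKernel Pc]
    (C : Set X) (hC : MeasurableSet C) (ε : ℝ≥0∞) (x x' : X)
    {Ωt : Type*} [MeasurableSpace Ωt] (μt : Measure Ωt) [IsProbabilityMeasure μt]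
    (Xt X't : ℕ → Ωt → X) (d : ℕ → Ωt → Bool)
    (hinit_t : ∀ᵐ ω ∂μt, Xt 0 ω = x ∧ X't 0 ω = x' ∧ d 0 ω = false)
    (habs : ∀ᵐ ω ∂μt, ∀ n, d n ω = true → d (n + 1) ω = true)
    (hdyn : ∀ (n : ℕ) (g : X × X → ℝ≥0∞) (h : (Fin (n + 1) → X × X) → ℝ≥0∞),
      Measurable g → Measurable h →
      ∫⁻ ω, (if d n ω = false ∧ d (n + 1) ω = false then
          g (Xt (n + 1) ω, X't (n + 1) ω) else 0) *
          h (fun i => (Xt i ω, X't i ω)) ∂μt =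
      ∫⁻ ω, (if d n ω = false then
          (1 - ε * Set.indicator (C ×ˢ C) (fun _ => (1 : ℝ≥0∞)) (Xt n ω, X't n ω)) *
          ∫⁻ y, g y ∂(Pc (Xt n ω, X't n ω)) else 0) *
          h (fun i => (Xt i ω, X't i ω)) ∂μt)
    {Ωc : Type*} [MeasurableSpace Ωc] (μc : Measure Ωc) [IsProbabilityMeasure μc]
    (Yc Y'c : ℕ → Ωc → X)
    (hinit_c : ∀ᵐ ω ∂μc, Yc 0 ω = x ∧ Y'c 0 ω = x')
    (hmarkov_c : ∀ (n : ℕ) (g : X × X → ℝ≥0∞) (h : (Fin (n + 1) → X × X) → ℝ≥0∞),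
      Measurable g → Measurable h →
      ∫⁻ ω, g (Yc (n + 1) ω, Y'c (n + 1) ω) * h (fun i => (Yc i ω, Y'c i ω)) ∂μc =
      ∫⁻ ω, (∫⁻ y, g y ∂(Pc (Yc n ω, Y'c n ω))) * h (fun i => (Yc i ω, Y'c i ω)) ∂μc) :
    ∀ (n : ℕ) (f : ℕ → (X × X) → ℝ≥0∞), (∀ i, Measurable (f i)) →
      ∫⁻ ω, (if d n ω = false then
          ∏ i ∈ Finset.range (n+1), f i (Xt i ω, X't i ω) else 0) ∂μt
      = ∫⁻ ω, (∏ m ∈ Finset.range n,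
            (1 - ε * Set.indicator (C ×ˢ C) (fun _ => (1 : ℝ≥0∞)) (Yc m ω, Y'c m ω))) *
          ∏ i ∈ Finset.range (n+1), f i (Yc i ω, Y'c i ω) ∂μc := by
  have hχm : Measurable fun z : X × X =>
      (1 - ε * Set.indicator (C ×ˢ C) (fun _ => (1 : ℝ≥0∞)) z) :=
    (measurable_const.sub
      (measurable_const.mul (measurable_const.indicator (hC.prod hC))))
  intro n
  induction n with
  | zero =>
      intro f hf
      have hL : ∀ᵐ ω ∂μt, (if d 0 ω = false then
          ∏ i ∈ Finset.range 1, f i (Xt i ω, X't i ω) else 0) = f 0 (x, x') := by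
        filter_upwards [hinit_t] with ω ⟨h1, h2, h3⟩
        simp [h1, h2, h3]
      have hR : ∀ᵐ ω ∂μc, (∏ m ∈ Finset.range 0,
            (1 - ε * Set.indicator (C ×ˢ C) (fun _ => (1 : ℝ≥0∞)) (Yc m ω, Y'c m ω))) *
          ∏ i ∈ Finset.range 1, f i (Yc i ω, Y'c i ω) = f 0 (x, x') := by
        filter_upwards [hinit_c] with ω ⟨h1, h2⟩
        simp [h1, h2]
      rw [lintegral_congr_ae hL, lintegral_congr_ae hR, lintegral_const, lintegral_const,
        measure_univ, measure_univ]
  | succ n ih =>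
      intro f hf
      set χ : X × X → ℝ≥0∞ :=
        fun z => (1 - ε * Set.indicator (C ×ˢ C) (fun _ => (1 : ℝ≥0∞)) z) with hχ
      set K : X × X → ℝ≥0∞ := fun z => ∫⁻ y, f (n+1) y ∂(Pc z) with hK
      have hKm : Measurable K :=
        Measurable.lintegral_kernel_prod_right' ((hf (n+1)).comp measurable_snd)
      set h₁ : (Fin (n + 1) → X × X) → ℝ≥0∞ := fun p => ∏ i : Fin (n+1), f i (p i) with hh₁def
      have h₁m : Measurable h₁ :=
        Finset.measurable_prod _ (fun i _ => (hf i).comp (measurable_pi_apply i))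
      have hh₁t : ∀ ω, h₁ (fun i : Fin (n+1) => (Xt i ω, X't i ω))
          = ∏ i ∈ Finset.range (n+1), f i (Xt i ω, X't i ω) := fun ω =>
        Fin.prod_univ_eq_prod_range (fun k => f k (Xt k ω, X't k ω)) (n+1)
      have hh₁c : ∀ ω, h₁ (fun i : Fin (n+1) => (Yc i ω, Y'c i ω))
          = ∏ i ∈ Finset.range (n+1), f i (Yc i ω, Y'c i ω) := fun ω =>
        Fin.prod_univ_eq_prod_range (fun k => f k (Yc k ω, Y'c k ω)) (n+1)
      -- the updated family
      set f' : ℕ → (X × X) → ℝ≥0∞ :=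
        Function.update f n (fun z => f n z * (χ z * K z)) with hf'def
      have hf' : ∀ i, Measurable (f' i) := by
        intro i
        by_cases hi : i = n
        · rw [hi]
          simp only [hf'def, Function.update_self]
          exact (hf n).mul (hχm.mul hKm)
        · simp only [hf'def, Function.update_of_ne hi]
          exact hf i
      have hprod' : ∀ (z : ℕ → X × X),
          ∏ i ∈ Finset.range (n+1), f' i (z i)
            = (χ (z n) * K (z n)) * ∏ i ∈ Finset.range (n+1), f i (z i) := by
        intro z
        rw [Finset.prod_range_succ, Finset.prod_range_succ (fun i => f i (z i))]
        rw [Finset.prod_congr rfl (fun i hi => by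
          rw [hf'def, Function.update_of_ne (by simp at hi; omega)])]
        simp only [hf'def, Function.update_self]
        ring
      calc
        ∫⁻ ω, (if d (n+1) ω = false then
            ∏ i ∈ Finset.range (n+2), f i (Xt i ω, X't i ω) else 0) ∂μt
          = ∫⁻ ω, (if d n ω = false ∧ d (n + 1) ω = false then
              f (n+1) (Xt (n + 1) ω, X't (n + 1) ω) else 0) *
              h₁ (fun i => (Xt i ω, X't i ω)) ∂μt := by
            apply lintegral_congr_ae
            filter_upwards [habs] with ω hab
            rw [hh₁t ω, ite_mul, zero_mul]
            by_cases h2 : d (n+1) ω = false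
            · by_cases h1 : d n ω = false
              · rw [if_pos h2, if_pos ⟨h1, h2⟩, Finset.prod_range_succ]
                ring
              · exfalso
                have := hab n (by revert h1; cases d n ω <;> simp)
                rw [this] at h2; exact absurd h2 (by simp)
            · rw [if_neg h2, if_neg (fun h => h2 h.2)]
        _ = ∫⁻ ω, (if d n ω = false then
              (1 - ε * Set.indicator (C ×ˢ C) (fun _ => (1 : ℝ≥0∞)) (Xt n ω, X't n ω)) *
              ∫⁻ y, f (n+1) y ∂(Pc (Xt n ω, X't n ω)) else 0) *
              h₁ (fun i => (Xt i ω, X't i ω)) ∂μt := hdyn n (f (n+1)) h₁ (hf (n+1)) h₁m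
        _ = ∫⁻ ω, (if d n ω = false then
              ∏ i ∈ Finset.range (n+1), f' i (Xt i ω, X't i ω) else 0) ∂μt := by
            apply lintegral_congr
            intro ω
            rw [hh₁t ω, ite_mul, zero_mul]
            by_cases h1 : d n ω = false
            · rw [if_pos h1, if_pos h1, hprod' (fun i => (Xt i ω, X't i ω))]
            · rw [if_neg h1, if_neg h1]
        _ = ∫⁻ ω, (∏ m ∈ Finset.range n, χ (Yc m ω, Y'c m ω)) *
              ∏ i ∈ Finset.range (n+1), f' i (Yc i ω, Y'c i ω) ∂μc := ih f' hf'
        _ = ∫⁻ ω, (∫⁻ y, f (n+1) y ∂(Pc (Yc n ω, Y'c n ω))) *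
              ((∏ m : Fin (n+1), χ (Yc m ω, Y'c m ω)) *
                ∏ i : Fin (n+1), f i (Yc i ω, Y'c i ω)) ∂μc := by
            apply lintegral_congr
            intro ω
            rw [hprod' (fun i => (Yc i ω, Y'c i ω))]
            rw [Fin.prod_univ_eq_prod_range (fun k => χ (Yc k ω, Y'c k ω)) (n+1),
              Fin.prod_univ_eq_prod_range (fun k => f k (Yc k ω, Y'c k ω)) (n+1),
              Finset.prod_range_succ (fun k => χ (Yc k ω, Y'c k ω))]
            show _ = K (Yc n ω, Y'c n ω) * _
            ring
        _ = ∫⁻ ω, f (n+1) (Yc (n + 1) ω, Y'c (n + 1) ω) *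
              ((∏ m : Fin (n+1), χ (Yc m ω, Y'c m ω)) *
                ∏ i : Fin (n+1), f i (Yc i ω, Y'c i ω)) ∂μc := by
            refine (hmarkov_c n (f (n+1))
              (fun p => (∏ m : Fin (n+1), χ (p m)) * ∏ i : Fin (n+1), f i (p i))
              (hf (n+1)) ?_).symm
            exact (Finset.measurable_prod _
                (fun i _ => hχm.comp (measurable_pi_apply i))).mul
              (Finset.measurable_prod _ (fun i _ => (hf i).comp (measurable_pi_apply i)))
        _ = ∫⁻ ω, (∏ m ∈ Finset.range (n+1), χ (Yc m ω, Y'c m ω)) *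
              ∏ i ∈ Finset.range (n+2), f i (Yc i ω, Y'c i ω) ∂μc := by
            apply lintegral_congr
            intro ω
            rw [Fin.prod_univ_eq_prod_range (fun k => χ (Yc k ω, Y'c k ω)) (n+1),
              Fin.prod_univ_eq_prod_range (fun k => f k (Yc k ω, Y'c k ω)) (n+1)]
            rw [Finset.prod_range_succ (fun k => f k (Yc k ω, Y'c k ω)) (n+1)]
            ring

/-- The distributional identity for the coupling time:
`Ẽ_{x,x',0}[r(T−1)] = ε ∑_{j≥0} (1−ε)^j Ě_{x,x'}[r(σ_j)]`, where `σ_j` is the `(j+1)`-th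
visit of the bivariate chain to `C × C` and `T` the coupling time of the extended chain. -/
theorem coupling_time_moment_identity {X : Type*} [MeasurableSpace X]
    (Pc : Kernel (X × X) (X × X)) [IsMarkovKernel Pc]
    (C : Set X) (hC : MeasurableSet C)
    (ν : Measure X) [IsProbabilityMeasure ν]
    (P : Kernel X X) [IsMarkovKernel P]
    (ε : ℝ≥0∞) (hε0 : 0 < ε) (hε1 : ε < 1)
    (hminor : ∀ y ∈ C, ε • ν ≤ P y)
    (x x' : X)
    -- the extended chain `(X̃_n, X̃'_n, d_n)` on a probability space `Ω̃`
    {Ωt : Type*} [MeasurableSpace Ωt] (μt : Measure Ωt) [IsProbabilityMeasure μt]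
    (Xt X't : ℕ → Ωt → X) (d : ℕ → Ωt → Bool)
    (hXtm : ∀ n, Measurable (Xt n)) (hX'tm : ∀ n, Measurable (X't n))
    (hdm : ∀ n, Measurable (d n))
    (hinit_t : ∀ᵐ ω ∂μt, Xt 0 ω = x ∧ X't 0 ω = x' ∧ d 0 ω = false)
    (habs : ∀ᵐ ω ∂μt, ∀ n, d n ω = true → d (n + 1) ω = true)
    (hdyn : ∀ (n : ℕ) (g : X × X → ℝ≥0∞) (h : (Fin (n + 1) → X × X) → ℝ≥0∞),
      Measurable g → Measurable h →
      ∫⁻ ω, (if d n ω = false ∧ d (n + 1) ω = false then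
          g (Xt (n + 1) ω, X't (n + 1) ω) else 0) *
          h (fun i => (Xt i ω, X't i ω)) ∂μt =
      ∫⁻ ω, (if d n ω = false then
          (1 - ε * Set.indicator (C ×ˢ C) (fun _ => (1 : ℝ≥0∞)) (Xt n ω, X't n ω)) *
          ∫⁻ y, g y ∂(Pc (Xt n ω, X't n ω)) else 0) *
          h (fun i => (Xt i ω, X't i ω)) ∂μt)
    -- the bivariate chain `(X̌_n, X̌'_n)` with kernel `P̌` on a probability space `Ω̌`
    {Ωc : Type*} [MeasurableSpace Ωc] (μc : Measure Ωc) [IsProbabilityMeasure μc]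
    (Yc Y'c : ℕ → Ωc → X)
    (hYm : ∀ n, Measurable (Yc n)) (hY'm : ∀ n, Measurable (Y'c n))
    (hinit_c : ∀ᵐ ω ∂μc, Yc 0 ω = x ∧ Y'c 0 ω = x')
    (hmarkov_c : ∀ (n : ℕ) (g : X × X → ℝ≥0∞) (h : (Fin (n + 1) → X × X) → ℝ≥0∞),
      Measurable g → Measurable h →
      ∫⁻ ω, g (Yc (n + 1) ω, Y'c (n + 1) ω) * h (fun i => (Yc i ω, Y'c i ω)) ∂μc =
      ∫⁻ ω, (∫⁻ y, g y ∂(Pc (Yc n ω, Y'c n ω))) * h (fun i => (Yc i ω, Y'c i ω)) ∂μc)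
    -- the coupling time of the extended chain
    (T : Ωt → ℕ∞)
    (hT : ∀ ω, T ω = ⨅ (k : ℕ) (_ : 1 ≤ k ∧ d k ω = true), (k : ℕ∞))
    -- the successive hitting times of `C × C` by the bivariate chain
    (σ : ℕ → Ωc → ℕ∞)
    (hσ0 : ∀ ω, σ 0 ω = ⨅ (n : ℕ) (_ : (Yc n ω, Y'c n ω) ∈ C ×ˢ C), (n : ℕ∞))
    (hσs : ∀ (j : ℕ) (ω : Ωc), σ (j + 1) ω =
      ⨅ (n : ℕ) (_ : σ j ω < (n : ℕ∞) ∧ (Yc n ω, Y'c n ω) ∈ C ×ˢ C), (n : ℕ∞))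
    (r : ℕ → ℝ) (hr : Subgeometric r) :
    ∫⁻ ω, rext r (T ω - 1) ∂μt =
      ε * ∑' j : ℕ, (1 - ε) ^ j * ∫⁻ ω, rext r (σ j ω) ∂μc := by
  classical
  obtain ⟨hr1, hrm, -, -⟩ := hr
  have hεtop : ε ≠ ∞ := (hε1.trans ENNReal.one_lt_top).ne
  have hq1 : 1 - (1 - ε) = ε := ENNReal.sub_sub_cancel ENNReal.one_ne_top hε1.le
  set A : ℕ → Ωc → Prop := fun k ω => (Yc k ω, Y'c k ω) ∈ C ×ˢ C with hA
  have hAmeas : ∀ k, MeasurableSet {ω | A k ω} :=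
    fun k => ((hYm k).prodMk (hY'm k)) (hC.prod hC)
  have hNmeas : ∀ n, Measurable fun ω => ncount A n ω := fun n =>
    Finset.measurable_sum _ fun k _ =>
      Measurable.ite (hAmeas k) measurable_const measurable_const
  have hNset : ∀ n j, MeasurableSet {ω | ncount A n ω ≤ j} := fun n j =>
    (hNmeas n) measurableSet_Iic
  have hdset : ∀ n, MeasurableSet {ω | d n ω = false} :=
    fun n => (hdm n) (measurableSet_singleton false)
  -- Step 1: the left-hand side
  have hLHS : ∫⁻ ω, rext r (T ω - 1) ∂μt
      = ∑' n : ℕ, rdelta r n * μt {ω | d n ω = false} := by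
    have hae : ∀ᵐ ω ∂μt, rext r (T ω - 1)
        = ∑' n : ℕ, (if d n ω = false then rdelta r n else 0) := by
      filter_upwards [hinit_t, habs] with ω h0 hab
      have hdmono : ∀ k m : ℕ, k ≤ m → d k ω = true → d m ω = true := by
        intro k m hkm
        induction m, hkm using Nat.le_induction with
        | base => exact id
        | succ m hm ih' => exact fun h => hab m (ih' h)
      have hT1 : 1 ≤ T ω := by
        rw [hT ω]; exact le_iInf₂ fun k hk => by exact_mod_cast hk.1
      rw [rext_eq_tsum r hrm]
      apply tsum_congr; intro n
      have hiff : ((n : ℕ∞) ≤ T ω - 1) ↔ d n ω = false := by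
        rw [enat_le_sub_one_iff hT1,
          show ((n:ℕ∞)+1) = ((n+1:ℕ):ℕ∞) by push_cast; ring]
        constructor
        · intro h
          by_contra hc
          have hdn : d n ω = true := by revert hc; cases d n ω <;> simp
          have hn0 : 1 ≤ n := by
            rcases Nat.eq_zero_or_pos n with h0' | h0'
            · exfalso; rw [h0'] at hdn; rw [h0.2.2] at hdn; simp at hdn
            · exact h0'
          have h2 : T ω ≤ (n : ℕ∞) := by rw [hT ω]; exact iInf₂_le n ⟨hn0, hdn⟩
          have := Nat.cast_le.mp (h.trans h2)
          omega
        · intro hdn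
          rw [hT ω]
          refine le_iInf₂ fun k hk => Nat.cast_le.mpr ?_
          by_contra hc
          have : d n ω = true := hdmono k n (by omega) hk.2
          rw [hdn] at this; simp at this
      by_cases hc : d n ω = false
      · rw [if_pos (hiff.mpr hc), if_pos hc]
      · rw [if_neg (fun h => hc (hiff.mp h)), if_neg hc]
    rw [lintegral_congr_ae hae,
      lintegral_tsum (fun n =>
        (Measurable.ite (hdset n) measurable_const measurable_const).aemeasurable)]
    exact tsum_congr fun n => lintegral_ite_const μt _ (hdset n) _
  -- Step 2: each σ-integral
  have hσint : ∀ j, ∫⁻ ω, rext r (σ j ω) ∂μc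
      = ∑' n : ℕ, rdelta r n * μc {ω | ncount A n ω ≤ j} := by
    intro j
    have hpt : ∀ ω, rext r (σ j ω)
        = ∑' n : ℕ, (if ncount A n ω ≤ j then rdelta r n else 0) := by
      intro ω
      rw [rext_eq_tsum r hrm]
      apply tsum_congr; intro n
      have hiff := le_sigma_iff A σ hσ0 hσs j n ω
      by_cases hc : ncount A n ω ≤ j
      · rw [if_pos (hiff.mpr hc), if_pos hc]
      · rw [if_neg (fun h => hc (hiff.mp h)), if_neg hc]
    simp_rw [hpt]
    rw [lintegral_tsum (fun n =>
      (Measurable.ite (hNset n j) measurable_const measurable_const).aemeasurable)]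
    exact tsum_congr fun n => lintegral_ite_const μc _ (hNset n j) _
  -- Step 3: geometric summation
  have hgeom : ∀ N : ℕ, ε * ∑' j : ℕ, (if N ≤ j then (1-ε) ^ j else 0) = (1-ε) ^ N := by
    intro N
    have hinj : Function.Injective (fun i : ℕ => N + i) := add_right_injective N
    have h1 : ∑' j : ℕ, (if N ≤ j then (1-ε) ^ j else 0) = ∑' i : ℕ, (1-ε) ^ (N + i) := by
      rw [← Function.Injective.tsum_eq (f := fun j => if N ≤ j then (1-ε) ^ j else 0) hinj
        (by
          intro j hj
          simp only [Function.mem_support, ne_eq, ite_eq_right_iff, not_forall] at hj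
          obtain ⟨hNj, -⟩ := hj
          exact ⟨j - N, show N + (j - N) = j by omega⟩)]
      apply tsum_congr; intro i
      rw [if_pos (by omega)]
    rw [h1]
    simp_rw [pow_add]
    rw [ENNReal.tsum_mul_left, ENNReal.tsum_geometric, hq1,
      ← mul_assoc, mul_comm ε ((1-ε) ^ N), mul_assoc,
      ENNReal.mul_inv_cancel hε0.ne' hεtop, mul_one]
  -- Step 4: product-to-power
  have hχpow : ∀ (n : ℕ) (ω : Ωc),
      (∏ m ∈ Finset.range n,
        (1 - ε * Set.indicator (C ×ˢ C) (fun _ => (1:ℝ≥0∞)) (Yc m ω, Y'c m ω)))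
      = (1-ε) ^ ncount A n ω := by
    intro n ω
    induction n with
    | zero => simp [ncount]
    | succ n ih =>
        rw [Finset.prod_range_succ, ih, ncount_succ]
        by_cases h : A n ω
        · rw [if_pos h, pow_add, pow_one]
          congr 1
          rw [Set.indicator_of_mem h, mul_one]
        · rw [if_neg h, add_zero, Set.indicator_of_notMem h, mul_zero, tsub_zero, mul_one]
  -- Step 5: the per-n identity via the main induction
  have hperN : ∀ n : ℕ, ε * ∑' j : ℕ, (1-ε) ^ j * μc {ω | ncount A n ω ≤ j}
      = μt {ω | d n ω = false} := by
    intro n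
    have h2 : ∀ j : ℕ, (1-ε) ^ j * μc {ω | ncount A n ω ≤ j}
        = ∫⁻ ω, (if ncount A n ω ≤ j then (1-ε) ^ j else 0) ∂μc :=
      fun j => (lintegral_ite_const μc _ (hNset n j) _).symm
    simp_rw [h2]
    rw [← lintegral_tsum (fun j =>
      (Measurable.ite (hNset n j) measurable_const measurable_const).aemeasurable)]
    rw [← lintegral_const_mul ε (by
      apply Measurable.ennreal_tsum
      exact fun j => Measurable.ite (hNset n j) measurable_const measurable_const)]
    have hptw : ∀ ω, ε * ∑' j : ℕ, (if ncount A n ω ≤ j then (1-ε) ^ j else 0)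
        = (1-ε) ^ ncount A n ω := fun ω => hgeom _
    rw [lintegral_congr hptw]
    have hmain := main_induction Pc C hC ε x x' μt Xt X't d hinit_t habs hdyn
      μc Yc Y'c hinit_c hmarkov_c n (fun _ _ => 1) (fun _ => measurable_const)
    simp only [Finset.prod_const_one, mul_one] at hmain
    rw [← lintegral_congr (hχpow n), ← hmain,
      lintegral_ite_const μt _ (hdset n) 1, one_mul]
  -- Final assembly
  rw [hLHS]
  simp_rw [hσint]
  have hswap : ∀ j : ℕ, (1-ε) ^ j * ∑' n : ℕ, rdelta r n * μc {ω | ncount A n ω ≤ j}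
      = ∑' n : ℕ, rdelta r n * ((1-ε) ^ j * μc {ω | ncount A n ω ≤ j}) := by
    intro j
    rw [← ENNReal.tsum_mul_left]
    exact tsum_congr fun n => by ring
  simp_rw [hswap]
  rw [ENNReal.tsum_comm, ← ENNReal.tsum_mul_left]
  apply tsum_congr; intro n
  rw [ENNReal.tsum_mul_left, ← mul_assoc, mul_comm ε (rdelta r n), mul_assoc, hperN n]
end
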